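/- arXiv:0909.4793 — 2 statements merged into one kernel-verified Lean document; each statement's English description precedes it below -/
import Mathlib

section
/- Fix a nonzero constant A ∈ ℂ. The multiplicative action of W(F_4) on (ℂ^*)^4/∼, where ∼ identifies z with −z (simultaneous sign flip of all coordinates), defined on generators by: s_{e_1−e_2} swapping z_1, z_2; s_{e_2−e_3} swapping z_2, z_3; s_{−e_1} sending z_1 to A/z_1; and s_{(e_1+e_2+e_3+e_4)/2} sending each z_j to A z_j/√(z_1 z_2 z_3 z_4); is a well-defined faithful group action. -/
open scoped RealInnerProductSpace
open Finset

/-- Standard basis vector `e j` of `ℝ⁴`. -/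
noncomputable def e4 (j : Fin 4) : EuclideanSpace ℝ (Fin 4) := EuclideanSpace.single j 1

/-- The F₄ root system. -/
def F4Roots : Set (EuclideanSpace ℝ (Fin 4)) :=
  {x | (∃ j : Fin 4, x = e4 j ∨ x = -e4 j) ∨
    (∃ ε : Fin 4 → ℝ, (∀ i, ε i = 1 ∨ ε i = -1) ∧
      x = (1 / 2 : ℝ) • ∑ i : Fin 4, ε i • e4 i) ∨
    (∃ j k : Fin 4, j < k ∧ ∃ a b : ℝ, (a = 1 ∨ a = -1) ∧ (b = 1 ∨ b = -1) ∧
      x = a • e4 j + b • e4 k)}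

/-- The set of reflections `s_α` (as linear automorphisms of `ℝ⁴`) for `α` in a set `S`. -/
def reflections (S : Set (EuclideanSpace ℝ (Fin 4))) :
    Set (EuclideanSpace ℝ (Fin 4) ≃ₗ[ℝ] EuclideanSpace ℝ (Fin 4)) :=
  {g | ∃ α ∈ S, α ≠ 0 ∧ ∀ β, g β = β - (2 * ⟪α, β⟫ / ⟪α, α⟫) • α}

/-- The Weyl group of type F₄, generated by all reflections of the root system. -/
noncomputable def WF4 : Subgroup (EuclideanSpace ℝ (Fin 4) ≃ₗ[ℝ] EuclideanSpace ℝ (Fin 4)) :=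
  Subgroup.closure (reflections F4Roots)

/-- The equivalence relation on `(ℂ*)⁴` identifying `z` with `-z`
(simultaneous sign flip of all coordinates). -/
def negSetoid : Setoid (Fin 4 → ℂˣ) where
  r z w := w = z ∨ w = -z
  iseqv := by
    constructor
    · intro z; exact Or.inl rfl
    · rintro z w (rfl | rfl)
      · exact Or.inl rfl
      · exact Or.inr (neg_neg z).symm
    · rintro x y z (rfl | rfl) h
      · exact h
      · rcases h with rfl | rfl
        · exact Or.inr rfl
        · exact Or.inl (neg_neg x)

/-- The quotient `(ℂ*)⁴/∼` where `z ∼ -z`. -/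
def CStar4Quot := Quotient negSetoid

namespace WF4Aux

abbrev E4 := EuclideanSpace ℝ (Fin 4)

lemma inner4 (x y : E4) : ⟪x, y⟫ = x 0 * y 0 + x 1 * y 1 + x 2 * y 2 + x 3 * y 3 := by
  simp [PiLp.inner_apply, Fin.sum_univ_four, RCLike.inner_apply, mul_comm]

lemma e4_apply (j i : Fin 4) : e4 j i = if i = j then 1 else 0 := by
  simp [e4, EuclideanSpace.single_apply]

lemma inner_e4 (j : Fin 4) (x : E4) : ⟪e4 j, x⟫ = x j := by
  fin_cases j <;> simp [inner4, e4_apply] <;> rfl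

noncomputable def Lc : AddSubgroup E4 where
  carrier := {v | (∀ i, ∃ n : ℤ, v i = n) ∧ ∃ m : ℤ, v 0 + v 1 + v 2 + v 3 = 2 * m}
  zero_mem' := ⟨fun i => ⟨0, by simp⟩, 0, by norm_num⟩
  add_mem' := by
    rintro v w ⟨hv1, m, hv2⟩ ⟨hw1, m', hw2⟩
    refine ⟨fun i => ?_, m + m', ?_⟩
    · obtain ⟨n, hn⟩ := hv1 i; obtain ⟨n', hn'⟩ := hw1 i
      exact ⟨n + n', by simp [PiLp.add_apply, hn, hn']⟩
    · simp only [PiLp.add_apply]; push_cast; linarith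
  neg_mem' := by
    rintro v ⟨hv1, m, hv2⟩
    refine ⟨fun i => ?_, -m, ?_⟩
    · obtain ⟨n, hn⟩ := hv1 i; exact ⟨-n, by simp [PiLp.neg_apply, hn]⟩
    · simp only [PiLp.neg_apply]; push_cast; linarith

lemma mem_Lc_of (w : E4) (n : Fin 4 → ℤ) (h : ∀ i, w i = n i)
    (hm : ∃ m : ℤ, n 0 + n 1 + n 2 + n 3 = 2 * m) : w ∈ Lc := by
  obtain ⟨m, hm⟩ := hm
  exact ⟨fun i => ⟨n i, h i⟩, m, by
    rw [h 0, h 1, h 2, h 3]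
    have hm' := congrArg (Int.cast : ℤ → ℝ) hm
    push_cast at hm' ⊢
    linarith⟩

end WF4Aux
namespace WF4Aux

lemma coeff_smul_neg (α v : E4) :
    (2 * ⟪-α, v⟫ / ⟪-α, -α⟫) • (-α) = (2 * ⟪α, v⟫ / ⟪α, α⟫) • α := by
  rw [inner_neg_neg, inner_neg_left]
  rw [show 2 * -⟪α,v⟫ / ⟪α,α⟫ = -(2 * ⟪α,v⟫ / ⟪α,α⟫) by ring]
  rw [neg_smul, smul_neg, neg_neg]

lemma mem_Lc_pair {j k : Fin 4} (hne : j ≠ k) (x y : ℤ) (hxy : Even (x + y)) (v : E4)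
    (hvj : v j = x) (hvk : v k = y) (hother : ∀ i, i ≠ j → i ≠ k → v i = 0) : v ∈ Lc := by
  apply mem_Lc_of _ (fun i => if i = j then x else if i = k then y else 0)
  · intro i
    by_cases hij : i = j
    · subst hij; simp [hvj]
    · by_cases hik : i = k
      · subst hik; simp [hij, hvk]
      · simp [hij, hik, hother i hij hik]
  · obtain ⟨r, hr⟩ := hxy
    refine ⟨r, ?_⟩
    fin_cases j <;> fin_cases k <;> simp_all <;> omega

lemma coeff_smul_mem {α : E4} (hα : α ∈ F4Roots) {v : E4} (hv : v ∈ Lc) :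
    (2 * ⟪α, v⟫ / ⟪α, α⟫) • α ∈ Lc := by
  obtain ⟨hv1, hv2⟩ := hv
  obtain ⟨m, hm⟩ := hv2
  choose nv hnv using hv1
  rcases hα with ⟨j, hj | hj⟩ | ⟨ε, hε, hform⟩ | ⟨j, k, hjk, a, b, ha, hb, hform⟩
  · subst hj
    have hc : 2 * ⟪e4 j, v⟫ / ⟪e4 j, e4 j⟫ = 2 * v j := by
      rw [inner_e4, inner_e4, e4_apply]; simp
    rw [hc]
    apply mem_Lc_of _ (fun i => if i = j then 2 * nv j else 0)
    · intro i
      by_cases hij : i = j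
      · subst hij; simp [PiLp.smul_apply, e4_apply, hnv i]
      · simp [PiLp.smul_apply, e4_apply, hij]
    · refine ⟨nv j, ?_⟩; fin_cases j <;> simp
  · subst hj
    rw [coeff_smul_neg]
    have hc : 2 * ⟪e4 j, v⟫ / ⟪e4 j, e4 j⟫ = 2 * v j := by
      rw [inner_e4, inner_e4, e4_apply]; simp
    rw [hc]
    apply mem_Lc_of _ (fun i => if i = j then 2 * nv j else 0)
    · intro i
      by_cases hij : i = j
      · subst hij; simp [PiLp.smul_apply, e4_apply, hnv i]
      · simp [PiLp.smul_apply, e4_apply, hij]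
    · refine ⟨nv j, ?_⟩; fin_cases j <;> simp
  · subst hform
    set α : E4 := (1 / 2 : ℝ) • ∑ i : Fin 4, ε i • e4 i with hαdef
    have hsq : ∀ i, ε i * ε i = 1 := by
      intro i; rcases hε i with h | h <;> rw [h] <;> norm_num
    have hai : ∀ i, α i = ε i / 2 := by
      intro i
      rw [hαdef]
      simp only [Fin.sum_univ_four, PiLp.smul_apply, PiLp.add_apply, e4_apply, smul_eq_mul]
      fin_cases i <;> simp <;> ring
    have hinner : ⟪α, v⟫ = (ε 0 * v 0 + ε 1 * v 1 + ε 2 * v 2 + ε 3 * v 3) / 2 := by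
      rw [inner4, hai, hai, hai, hai]; ring
    have hnorm : ⟪α, α⟫ = 1 := by
      rw [inner4, hai, hai, hai, hai]
      linear_combination (hsq 0) / 4 + (hsq 1) / 4 + (hsq 2) / 4 + (hsq 3) / 4
    set η : Fin 4 → ℤ := fun i => if ε i = 1 then 1 else -1 with hηdef
    have hη : ∀ i, ε i = (η i : ℝ) := by
      intro i; rcases hε i with h | h <;> simp [hηdef, h] <;> norm_num
    have hηpm : ∀ i, η i = 1 ∨ η i = -1 := by
      intro i; rcases hε i with h | h <;> simp [hηdef, h] <;> norm_num
    have hsum : nv 0 + nv 1 + nv 2 + nv 3 = 2 * m := by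
      have h2 : (nv 0 : ℝ) + nv 1 + nv 2 + nv 3 = 2 * m := by
        rw [← hnv 0, ← hnv 1, ← hnv 2, ← hnv 3]; exact hm
      exact_mod_cast h2
    have hNmod : (nv 0 + nv 1 + nv 2 + nv 3) % 2 = 0 := by omega
    have hNeven : ∃ M : ℤ, η 0 * nv 0 + η 1 * nv 1 + η 2 * nv 2 + η 3 * nv 3 = 2 * M := by
      rcases hηpm 0 with h0 | h0 <;> rcases hηpm 1 with h1 | h1 <;>
        rcases hηpm 2 with h2 | h2 <;> rcases hηpm 3 with h3 | h3 <;>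
        rw [h0, h1, h2, h3] <;>
        [exact ⟨(nv 0 + nv 1 + nv 2 + nv 3) / 2, by omega⟩;
         exact ⟨(nv 0 + nv 1 + nv 2 - nv 3) / 2, by omega⟩;
         exact ⟨(nv 0 + nv 1 - nv 2 + nv 3) / 2, by omega⟩;
         exact ⟨(nv 0 + nv 1 - nv 2 - nv 3) / 2, by omega⟩;
         exact ⟨(nv 0 - nv 1 + nv 2 + nv 3) / 2, by omega⟩;
         exact ⟨(nv 0 - nv 1 + nv 2 - nv 3) / 2, by omega⟩;
         exact ⟨(nv 0 - nv 1 - nv 2 + nv 3) / 2, by omega⟩;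
         exact ⟨(nv 0 - nv 1 - nv 2 - nv 3) / 2, by omega⟩;
         exact ⟨(-nv 0 + nv 1 + nv 2 + nv 3) / 2, by omega⟩;
         exact ⟨(-nv 0 + nv 1 + nv 2 - nv 3) / 2, by omega⟩;
         exact ⟨(-nv 0 + nv 1 - nv 2 + nv 3) / 2, by omega⟩;
         exact ⟨(-nv 0 + nv 1 - nv 2 - nv 3) / 2, by omega⟩;
         exact ⟨(-nv 0 - nv 1 + nv 2 + nv 3) / 2, by omega⟩;
         exact ⟨(-nv 0 - nv 1 + nv 2 - nv 3) / 2, by omega⟩;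
         exact ⟨(-nv 0 - nv 1 - nv 2 + nv 3) / 2, by omega⟩;
         exact ⟨(-nv 0 - nv 1 - nv 2 - nv 3) / 2, by omega⟩]
    obtain ⟨M, hM⟩ := hNeven
    have hc : 2 * ⟪α, v⟫ / ⟪α, α⟫ = 2 * (M : ℝ) := by
      rw [hinner, hnorm, hnv 0, hnv 1, hnv 2, hnv 3, hη 0, hη 1, hη 2, hη 3]
      rw [show ((η 0 : ℝ) * nv 0 + η 1 * nv 1 + η 2 * nv 2 + η 3 * nv 3) = 2 * M by
        exact_mod_cast congrArg (Int.cast : ℤ → ℝ) hM]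
      ring
    rw [hc]
    apply mem_Lc_of _ (fun i => M * η i)
    · intro i
      rw [PiLp.smul_apply, hai i, hη i, smul_eq_mul]
      push_cast
      ring
    · have hev : Even (η 0 + η 1 + η 2 + η 3) := by
        rcases hηpm 0 with h0 | h0 <;> rcases hηpm 1 with h1 | h1 <;>
          rcases hηpm 2 with h2 | h2 <;> rcases hηpm 3 with h3 | h3 <;>
          rw [h0, h1, h2, h3] <;> decide
      obtain ⟨r, hr⟩ := hev
      exact ⟨M * r, by rw [show (M * η 0 + M * η 1 + M * η 2 + M * η 3)
        = M * (η 0 + η 1 + η 2 + η 3) by ring, hr]; ring⟩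
  · subst hform
    have hne' : j ≠ k := hjk.ne
    have h1 : ⟪a • e4 j + b • e4 k, v⟫ = a * v j + b * v k := by
      rw [inner_add_left, real_inner_smul_left, real_inner_smul_left, inner_e4, inner_e4]
    have h2 : ⟪a • e4 j + b • e4 k, a • e4 j + b • e4 k⟫ = 2 := by
      rw [inner_add_left, real_inner_smul_left, real_inner_smul_left,
        inner_add_right, inner_add_right, real_inner_smul_right, real_inner_smul_right,
        real_inner_smul_right, real_inner_smul_right, inner_e4, inner_e4, inner_e4, inner_e4,
        e4_apply, e4_apply, e4_apply, e4_apply]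
      rcases ha with rfl | rfl <;> rcases hb with rfl | rfl <;>
        simp [hne', hne'.symm] <;> norm_num
    have hcoordj : ∀ c : ℝ, (c • (a • e4 j + b • e4 k)) j = c * a := by
      intro c
      simp only [PiLp.smul_apply, PiLp.add_apply, e4_apply, smul_eq_mul, if_true, eq_self_iff_true, if_pos rfl,
        if_neg hne']
      ring
    have hcoordk : ∀ c : ℝ, (c • (a • e4 j + b • e4 k)) k = c * b := by
      intro c
      simp only [PiLp.smul_apply, PiLp.add_apply, e4_apply, smul_eq_mul, if_true, eq_self_iff_true, if_pos rfl,
        if_neg (Ne.symm hne')]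
      ring
    have hcoordo : ∀ (c : ℝ) i, i ≠ j → i ≠ k → (c • (a • e4 j + b • e4 k)) i = 0 := by
      intro c i hij hik
      simp only [PiLp.smul_apply, PiLp.add_apply, e4_apply, smul_eq_mul, if_neg hij, if_neg hik]
      ring
    rw [h1, h2]
    rcases ha with rfl | rfl <;> rcases hb with rfl | rfl
    · refine mem_Lc_pair hne' (nv j + nv k) (nv j + nv k) ⟨nv j + nv k, by ring⟩ _ ?_ ?_ ?_
      · rw [hcoordj, hnv j, hnv k]; push_cast; ring
      · rw [hcoordk, hnv j, hnv k]; push_cast; ring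
      · intro i hij hik; exact hcoordo _ i hij hik
    · refine mem_Lc_pair hne' (nv j - nv k) (nv k - nv j) ⟨0, by ring⟩ _ ?_ ?_ ?_
      · rw [hcoordj, hnv j, hnv k]; push_cast; ring
      · rw [hcoordk, hnv j, hnv k]; push_cast; ring
      · intro i hij hik; exact hcoordo _ i hij hik
    · refine mem_Lc_pair hne' (nv j - nv k) (nv k - nv j) ⟨0, by ring⟩ _ ?_ ?_ ?_
      · rw [hcoordj, hnv j, hnv k]; push_cast; ring
      · rw [hcoordk, hnv j, hnv k]; push_cast; ring
      · intro i hij hik; exact hcoordo _ i hij hik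
    · refine mem_Lc_pair hne' (nv j + nv k) (nv j + nv k) ⟨nv j + nv k, by ring⟩ _ ?_ ?_ ?_
      · rw [hcoordj, hnv j, hnv k]; push_cast; ring
      · rw [hcoordk, hnv j, hnv k]; push_cast; ring
      · intro i hij hik; exact hcoordo _ i hij hik

end WF4Aux
namespace WF4Aux

lemma refl_sq {g : E4 ≃ₗ[ℝ] E4} {α : E4} (hα : α ≠ 0)
    (h : ∀ β, g β = β - (2 * ⟪α, β⟫ / ⟪α, α⟫) • α) : ∀ β, g (g β) = β := by
  intro β
  have hαα : ⟪α, α⟫ ≠ 0 := fun h0 => hα (inner_self_eq_zero.mp h0)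
  have h1 : ⟪α, g β⟫ = -⟪α, β⟫ := by
    rw [h, inner_sub_right, real_inner_smul_right, div_mul_cancel₀ _ hαα]
    ring
  rw [h (g β), h1, h β]
  rw [show 2 * -⟪α, β⟫ / ⟪α, α⟫ = -(2 * ⟪α, β⟫ / ⟪α, α⟫) by ring, neg_smul]
  abel

lemma WF4_pres : ∀ g ∈ WF4, (∀ v ∈ Lc, g v ∈ Lc) := by
  intro g hg
  refine (Subgroup.closure_induction
    (p := fun g _ => (∀ v ∈ Lc, g v ∈ Lc) ∧ (∀ v ∈ Lc, g⁻¹ v ∈ Lc)) ?_ ?_ ?_ ?_ hg).1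
  · rintro x ⟨α, hαS, hαne, hform⟩
    have hsq := refl_sq hαne hform
    have hinv : ∀ v, (x⁻¹ : E4 ≃ₗ[ℝ] E4) v = x v := by
      intro v
      conv_lhs => rw [← hsq v]
      exact x.symm_apply_apply (x v)
    constructor
    · intro v hv; rw [hform v]; exact Lc.sub_mem hv (coeff_smul_mem hαS hv)
    · intro v hv; rw [hinv v, hform v]; exact Lc.sub_mem hv (coeff_smul_mem hαS hv)
  · exact ⟨fun v hv => hv, fun v hv => hv⟩
  · rintro x y _ _ ⟨hx1, hx2⟩ ⟨hy1, hy2⟩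
    constructor
    · intro v hv; exact hx1 _ (hy1 _ hv)
    · intro v hv
      rw [show ((x * y)⁻¹ : E4 ≃ₗ[ℝ] E4) v = y⁻¹ (x⁻¹ v) from rfl]
      exact hy2 _ (hx2 _ hv)
  · rintro x _ ⟨hx1, hx2⟩
    exact ⟨hx2, by simpa using hx1⟩

noncomputable def resHom (x : WF4) : Lc →+ Lc :=
  AddMonoidHom.mk' (fun v => ⟨x.1 v.1, WF4_pres x.1 x.2 v.1 v.2⟩)
    (by intro a b; apply Subtype.ext; exact map_add x.1 a.1 b.1)

lemma resHom_mul_apply (x y : WF4) (v : Lc) : resHom (x * y) v = resHom x (resHom y v) :=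
  Subtype.ext rfl

lemma resHom_one_apply (v : Lc) : resHom 1 v = v := Subtype.ext rfl

lemma resHom_inv_left (x : WF4) (v : Lc) : resHom x⁻¹ (resHom x v) = v :=
  Subtype.ext (x.1.symm_apply_apply v.1)

lemma resHom_inv_right (x : WF4) (v : Lc) : resHom x (resHom x⁻¹ v) = v :=
  Subtype.ext (x.1.apply_symm_apply v.1)

abbrev Tc := Lc →+ Additive ℂˣ

noncomputable def chiFun (u : Fin 4 → ℂˣ) (v : E4) : ℂˣ :=
  u 0 ^ ⌊v 0⌋ * u 1 ^ ⌊v 1⌋ * u 2 ^ ⌊v 2⌋ * u 3 ^ ⌊v 3⌋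

lemma chiFun_eval (u : Fin 4 → ℂˣ) (w : E4) (n : Fin 4 → ℤ) (h : ∀ i, w i = n i) :
    chiFun u w = u 0 ^ n 0 * u 1 ^ n 1 * u 2 ^ n 2 * u 3 ^ n 3 := by
  rw [chiFun, h 0, h 1, h 2, h 3, Int.floor_intCast, Int.floor_intCast, Int.floor_intCast,
    Int.floor_intCast]

lemma chiFun_add (u : Fin 4 → ℂˣ) {v w : E4} (hv : v ∈ Lc) (hw : w ∈ Lc) :
    chiFun u (v + w) = chiFun u v * chiFun u w := by
  obtain ⟨hv1, -⟩ := hv; obtain ⟨hw1, -⟩ := hw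
  have key : ∀ i, ⌊(v + w) i⌋ = ⌊v i⌋ + ⌊w i⌋ := by
    intro i; obtain ⟨n, hn⟩ := hv1 i; obtain ⟨p, hp⟩ := hw1 i
    rw [PiLp.add_apply, hn, hp, ← Int.cast_add, Int.floor_intCast, Int.floor_intCast,
      Int.floor_intCast]
  rw [chiFun, chiFun, chiFun, key 0, key 1, key 2, key 3, zpow_add, zpow_add, zpow_add, zpow_add]
  simp only [mul_assoc, mul_left_comm, mul_comm]

noncomputable def chi (u : Fin 4 → ℂˣ) : Tc :=
  AddMonoidHom.mk' (fun v => Additive.ofMul (chiFun u v.1))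
    (fun a b => congrArg Additive.ofMul (chiFun_add u a.2 b.2))

lemma chi_apply (u : Fin 4 → ℂˣ) (v : Lc) : chi u v = Additive.ofMul (chiFun u v.1) := rfl

end WF4Aux
namespace WF4Aux

lemma coord_sub (x y : E4) (i : Fin 4) : (x - y) i = x i - y i := rfl
lemma coord_add' (x y : E4) (i : Fin 4) : (x + y) i = x i + y i := rfl

lemma mem_Lc_sub_e4 {j k : Fin 4} (h : j ≠ k) : e4 j - e4 k ∈ Lc := by
  refine mem_Lc_pair h 1 (-1) ⟨0, by ring⟩ _ ?_ ?_ ?_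
  · simp [coord_sub, e4_apply, h]
  · simp [coord_sub, e4_apply, Ne.symm h]
  · intro i hij hik; simp [coord_sub, e4_apply, hij, hik]

lemma mem_Lc_add_e4 {j k : Fin 4} (h : j ≠ k) : e4 j + e4 k ∈ Lc := by
  refine mem_Lc_pair h 1 1 ⟨1, by ring⟩ _ ?_ ?_ ?_
  · simp [coord_add', e4_apply, h]
  · simp [coord_add', e4_apply, Ne.symm h]
  · intro i hij hik; simp [coord_add', e4_apply, hij, hik]

lemma mem_Lc_two_e4 (j : Fin 4) : e4 j + e4 j ∈ Lc := by
  apply mem_Lc_of _ (fun i => if i = j then 2 else 0)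
  · intro i
    by_cases hij : i = j
    · subst hij; norm_num [coord_add', e4_apply]
    · simp [coord_add', e4_apply, hij]
  · refine ⟨1, ?_⟩; fin_cases j <;> norm_num [Fin.ext_iff] <;> decide

noncomputable def B1 : Lc := ⟨e4 0 - e4 1, mem_Lc_sub_e4 (by decide)⟩
noncomputable def B2 : Lc := ⟨e4 1 - e4 2, mem_Lc_sub_e4 (by decide)⟩
noncomputable def B3 : Lc := ⟨e4 2 - e4 3, mem_Lc_sub_e4 (by decide)⟩
noncomputable def B4 : Lc := ⟨e4 2 + e4 3, mem_Lc_add_e4 (by decide)⟩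
noncomputable def P00 : Lc := ⟨e4 0 + e4 0, mem_Lc_two_e4 0⟩
noncomputable def P01 : Lc := ⟨e4 0 + e4 1, mem_Lc_add_e4 (by decide)⟩
noncomputable def P02 : Lc := ⟨e4 0 + e4 2, mem_Lc_add_e4 (by decide)⟩
noncomputable def P03 : Lc := ⟨e4 0 + e4 3, mem_Lc_add_e4 (by decide)⟩

lemma e4_coords (j : Fin 4) : e4 0 j = (if j = 0 then (1:ℝ) else 0) := e4_apply 0 j

lemma zsmul_coord (c : ℤ) (x : E4) (i : Fin 4) : (c • x) i = (c : ℝ) * x i := by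
  rw [← Int.cast_smul_eq_zsmul ℝ]; rfl

lemma Lc_decomp (v : Lc) : ∃ c1 c2 c3 c4 : ℤ, v = c1 • B1 + c2 • B2 + c3 • B3 + c4 • B4 := by
  obtain ⟨hw1, hw2⟩ := v.2
  obtain ⟨m, hm⟩ := hw2
  choose nv hnv using hw1
  have hmR : (nv 0 : ℝ) + nv 1 + nv 2 + nv 3 = 2 * m := by
    rw [← hnv 0, ← hnv 1, ← hnv 2, ← hnv 3]; exact hm
  refine ⟨nv 0, nv 0 + nv 1, m - nv 3, m, ?_⟩
  apply Subtype.ext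
  have hcoe : ((((nv 0 : ℤ)) • B1 + ((nv 0 + nv 1 : ℤ)) • B2 + ((m - nv 3 : ℤ)) • B3
      + (m : ℤ) • B4 : Lc) : E4)
      = (nv 0 : ℤ) • (e4 0 - e4 1) + ((nv 0 + nv 1 : ℤ)) • (e4 1 - e4 2)
        + ((m - nv 3 : ℤ)) • (e4 2 - e4 3) + (m : ℤ) • (e4 2 + e4 3) := by
    simp [B1, B2, B3, B4]
  rw [hcoe]
  refine PiLp.ext fun i => ?_
  rw [coord_add', coord_add', coord_add', zsmul_coord, zsmul_coord, zsmul_coord, zsmul_coord]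
  fin_cases i <;>
    simp only [coord_sub, coord_add', e4_apply] <;> rw [hnv] <;> push_cast <;>
    norm_num <;> linarith [hmR]

end WF4Aux
namespace WF4Aux

lemma chi_ext {χ₁ χ₂ : Tc} (h1 : χ₁ B1 = χ₂ B1) (h2 : χ₁ B2 = χ₂ B2)
    (h3 : χ₁ B3 = χ₂ B3) (h4 : χ₁ B4 = χ₂ B4) : χ₁ = χ₂ := by
  apply AddMonoidHom.ext; intro v
  obtain ⟨c1, c2, c3, c4, rfl⟩ := Lc_decomp v
  simp only [map_add, AddMonoidHom.map_zsmul, h1, h2, h3, h4]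

lemma Lc_sum_int {v : E4} (nv : Fin 4 → ℤ) (hnv : ∀ i, v i = nv i) {m : ℤ}
    (hm : v 0 + v 1 + v 2 + v 3 = 2 * m) : nv 0 + nv 1 + nv 2 + nv 3 = 2 * m := by
  have : (nv 0 : ℝ) + nv 1 + nv 2 + nv 3 = 2 * m := by
    rw [← hnv 0, ← hnv 1, ← hnv 2, ← hnv 3]; exact hm
  exact_mod_cast this

lemma chi_neg (u : Fin 4 → ℂˣ) : chi (fun i => -u i) = chi u := by
  apply AddMonoidHom.ext; intro v
  obtain ⟨hv1, m, hm⟩ := v.2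
  choose nv hnv using hv1
  have hmZ := Lc_sum_int nv hnv hm
  apply congrArg Additive.ofMul
  rw [chiFun_eval _ _ nv hnv, chiFun_eval u _ nv hnv]
  have hneg : ∀ (x : ℂˣ) (n : ℤ), (-x) ^ n = (-1) ^ n * x ^ n := by
    intro x n; rw [← neg_one_mul, mul_zpow]
  rw [hneg (u 0) (nv 0), hneg (u 1) (nv 1), hneg (u 2) (nv 2), hneg (u 3) (nv 3)]
  have hsign : ((-1 : ℂˣ)) ^ nv 0 * (-1) ^ nv 1 * (-1) ^ nv 2 * (-1) ^ nv 3 = 1 := by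
    rw [← zpow_add, ← zpow_add, ← zpow_add, hmZ, zpow_mul,
      show ((-1 : ℂˣ)) ^ (2:ℤ) = 1 by rw [zpow_two]; simp, one_zpow]
  calc ((-1:ℂˣ) ^ nv 0 * u 0 ^ nv 0) * ((-1) ^ nv 1 * u 1 ^ nv 1)
        * ((-1) ^ nv 2 * u 2 ^ nv 2) * ((-1) ^ nv 3 * u 3 ^ nv 3)
      = ((-1:ℂˣ) ^ nv 0 * (-1) ^ nv 1 * (-1) ^ nv 2 * (-1) ^ nv 3)
        * (u 0 ^ nv 0 * u 1 ^ nv 1 * u 2 ^ nv 2 * u 3 ^ nv 3) := by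
        simp only [mul_assoc, mul_left_comm, mul_comm]
    _ = u 0 ^ nv 0 * u 1 ^ nv 1 * u 2 ^ nv 2 * u 3 ^ nv 3 := by rw [hsign, one_mul]

noncomputable def Fmap (a : ℂˣ) : CStar4Quot → Tc :=
  Quotient.lift (fun z : Fin 4 → ℂˣ => chi (fun i => z i * a⁻¹)) (by
    rintro z w (rfl | rfl)
    · rfl
    · show chi (fun i => z i * a⁻¹) = chi (fun i => (-z) i * a⁻¹)
      have : (fun i => (-z) i * a⁻¹) = fun i => -(z i * a⁻¹) := by
        funext i; show (-(z i)) * a⁻¹ = _; rw [neg_mul]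
      rw [this, chi_neg])

lemma Fmap_mk (a : ℂˣ) (z : Fin 4 → ℂˣ) :
    Fmap a (Quotient.mk negSetoid z) = chi (fun i => z i * a⁻¹) := rfl

-- evaluations of chiFun at specific lattice vectors
lemma chiFun_sub_e4 (u : Fin 4 → ℂˣ) {j k : Fin 4} (h : j ≠ k) :
    chiFun u (e4 j - e4 k) = u j * (u k)⁻¹ := by
  rw [chiFun_eval u _ (fun i => if i = j then 1 else if i = k then -1 else 0) (by
    intro i
    by_cases hij : i = j
    · subst hij; simp [coord_sub, e4_apply, h]
    · by_cases hik : i = k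
      · subst hik; simp [coord_sub, e4_apply, hij, Ne.symm h]
      · simp [coord_sub, e4_apply, hij, hik])]
  fin_cases j <;> fin_cases k <;> first
    | exact absurd rfl h
    | (simp; try exact mul_comm _ _)

lemma chiFun_add_e4 (u : Fin 4 → ℂˣ) {j k : Fin 4} (h : j ≠ k) :
    chiFun u (e4 j + e4 k) = u j * u k := by
  rw [chiFun_eval u _ (fun i => if i = j then 1 else if i = k then 1 else 0) (by
    intro i
    by_cases hij : i = j
    · subst hij; simp [coord_add', e4_apply, h]
    · by_cases hik : i = k
      · subst hik; simp [coord_add', e4_apply, hij, Ne.symm h]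
      · simp [coord_add', e4_apply, hij, hik])]
  fin_cases j <;> fin_cases k <;> first
    | exact absurd rfl h
    | (simp; try exact mul_comm _ _)

lemma chiFun_negpair_e4 (u : Fin 4 → ℂˣ) {j k : Fin 4} (h : j ≠ k) :
    chiFun u (-e4 j - e4 k) = (u j)⁻¹ * (u k)⁻¹ := by
  rw [chiFun_eval u _ (fun i => if i = j then -1 else if i = k then -1 else 0) (by
    intro i
    by_cases hij : i = j
    · subst hij; simp [coord_sub, PiLp.neg_apply, e4_apply, h]
    · by_cases hik : i = k
      · subst hik; simp [coord_sub, PiLp.neg_apply, e4_apply, hij, Ne.symm h]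
      · simp [coord_sub, PiLp.neg_apply, e4_apply, hij, hik])]
  fin_cases j <;> fin_cases k <;> first
    | exact absurd rfl h
    | (simp; try exact mul_comm _ _)

lemma chiFun_two_e4 (u : Fin 4 → ℂˣ) (j : Fin 4) :
    chiFun u (e4 j + e4 j) = u j * u j := by
  rw [chiFun_eval u _ (fun i => if i = j then 2 else 0) (by
    intro i
    by_cases hij : i = j
    · subst hij; norm_num [coord_add', e4_apply]
    · simp [coord_add', e4_apply, hij])]
  fin_cases j <;> simp <;> rw [pow_two]

end WF4Aux
namespace WF4Aux

lemma vec_ext {x y : E4} (h : ∀ i, x i = y i) : x = y := PiLp.ext h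

lemma hB1 : B1 = P00 - P01 := by
  apply Subtype.ext
  show (e4 0 - e4 1 : E4) = (e4 0 + e4 0) - (e4 0 + e4 1)
  apply vec_ext; intro i; fin_cases i <;> simp [coord_sub, coord_add', e4_apply]

lemma hB2 : B2 = P01 - P02 := by
  apply Subtype.ext
  show (e4 1 - e4 2 : E4) = (e4 0 + e4 1) - (e4 0 + e4 2)
  apply vec_ext; intro i; fin_cases i <;> simp [coord_sub, coord_add', e4_apply]

lemma hB3 : B3 = P02 - P03 := by
  apply Subtype.ext
  show (e4 2 - e4 3 : E4) = (e4 0 + e4 2) - (e4 0 + e4 3)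
  apply vec_ext; intro i; fin_cases i <;> simp [coord_sub, coord_add', e4_apply]

lemma hB4 : B4 = P02 + P03 - P00 := by
  apply Subtype.ext
  show (e4 2 + e4 3 : E4) = ((e4 0 + e4 2) + (e4 0 + e4 3)) - (e4 0 + e4 0)
  apply vec_ext; intro i; fin_cases i <;> simp [coord_sub, coord_add', e4_apply]

lemma chi_congr_fun {u v : Fin 4 → ℂˣ} (h : chi u = chi v) (p : Lc) :
    chiFun u p.1 = chiFun v p.1 :=
  Additive.ofMul.injective (DFunLike.congr_fun h p)

lemma units_sq_cases (x y : ℂˣ) (h : y * y = x * x) : y = x ∨ y = -x := by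
  have hc : (y : ℂ) * y = (x : ℂ) * x := by exact_mod_cast congrArg Units.val h
  have h0 : ((y : ℂ) - x) * ((y : ℂ) + x) = 0 := by linear_combination hc
  rcases mul_eq_zero.mp h0 with h' | h'
  · left; exact Units.ext (sub_eq_zero.mp h')
  · right; exact Units.ext (by rw [Units.val_neg]; exact eq_neg_of_add_eq_zero_left h')

lemma Fmap_inj (a : ℂˣ) : Function.Injective (Fmap a) := by
  intro q1 q2
  refine Quotient.inductionOn₂ q1 q2 ?_
  intro z w h
  rw [Fmap_mk, Fmap_mk] at h
  set u : Fin 4 → ℂˣ := fun i => z i * a⁻¹ with hu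
  set v : Fin 4 → ℂˣ := fun i => w i * a⁻¹ with hv
  have hz : ∀ i, z i = u i * a := fun i => (inv_mul_cancel_right (z i) a).symm
  have hw : ∀ i, w i = v i * a := fun i => (inv_mul_cancel_right (w i) a).symm
  have h00 : u 0 * u 0 = v 0 * v 0 := by
    have := chi_congr_fun h P00
    rw [show (P00 : E4) = e4 0 + e4 0 from rfl] at this
    rwa [chiFun_two_e4, chiFun_two_e4] at this
  have h0j : ∀ j : Fin 4, j ≠ 0 → u 0 * u j = v 0 * v j := by
    intro j hj
    have hne : (0 : Fin 4) ≠ j := Ne.symm hj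
    fin_cases j
    · exact absurd rfl hj
    · have := chi_congr_fun h P01
      rw [show (P01 : E4) = e4 0 + e4 1 from rfl] at this
      rwa [chiFun_add_e4 _ (by decide), chiFun_add_e4 _ (by decide)] at this
    · have := chi_congr_fun h P02
      rw [show (P02 : E4) = e4 0 + e4 2 from rfl] at this
      rwa [chiFun_add_e4 _ (by decide), chiFun_add_e4 _ (by decide)] at this
    · have := chi_congr_fun h P03
      rw [show (P03 : E4) = e4 0 + e4 3 from rfl] at this
      rwa [chiFun_add_e4 _ (by decide), chiFun_add_e4 _ (by decide)] at this
  rcases units_sq_cases (u 0) (v 0) h00.symm with h0 | h0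
  · apply Quotient.sound
    left
    funext i
    have huv : ∀ i, v i = u i := by
      intro i
      by_cases hi : i = 0
      · subst hi; exact h0
      · have := h0j i hi
        rw [h0] at this
        exact (mul_left_cancel this).symm
    rw [hw i, hz i, huv i]
  · apply Quotient.sound
    right
    have huv : ∀ i, v i = -u i := by
      intro i
      by_cases hi : i = 0
      · subst hi; exact h0
      · have := h0j i hi
        rw [h0] at this
        have : -(u 0 * v i) = u 0 * u i := by rw [this, neg_mul]
        have h2 : u 0 * v i = u 0 * (-u i) := by
          rw [mul_neg]; rw [← this, neg_neg]
        exact mul_left_cancel h2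
    show w = -z
    funext i
    show w i = -(z i)
    rw [hw i, hz i, huv i, neg_mul]

lemma exists_sqrt (c : ℂˣ) : ∃ s : ℂˣ, s * s = c := by
  obtain ⟨z, hz⟩ := IsAlgClosed.exists_pow_nat_eq (c : ℂ) (n := 2) (by norm_num)
  have hzne : z ≠ 0 := by
    rintro rfl; rw [show ((0:ℂ)) ^ 2 = 0 by norm_num] at hz; exact c.ne_zero hz.symm
  refine ⟨Units.mk0 z hzne, Units.ext ?_⟩
  push_cast [Units.val_mk0]
  rw [← sq]; exact hz

lemma Fmap_surj (a : ℂˣ) : Function.Surjective (Fmap a) := by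
  intro χ
  obtain ⟨s, hs⟩ := exists_sqrt (Additive.toMul (χ P00))
  set t1 := Additive.toMul (χ P01)
  set t2 := Additive.toMul (χ P02)
  set t3 := Additive.toMul (χ P03)
  set u : Fin 4 → ℂˣ := ![s, t1 * s⁻¹, t2 * s⁻¹, t3 * s⁻¹] with hudef
  refine ⟨Quotient.mk negSetoid (fun i => u i * a), ?_⟩
  rw [Fmap_mk]
  rw [show (fun i => u i * a * a⁻¹) = u from funext fun i => mul_inv_cancel_right _ _]
  have hu0 : u 0 = s := rfl
  have hu1 : u 1 = t1 * s⁻¹ := rfl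
  have hu2 : u 2 = t2 * s⁻¹ := rfl
  have hu3 : u 3 = t3 * s⁻¹ := rfl
  apply chi_ext
  · show Additive.ofMul (chiFun u B1.1) = χ B1
    rw [show B1.1 = e4 0 - e4 1 from rfl, chiFun_sub_e4 _ (by decide), hu0, hu1, hB1, map_sub]
    apply Additive.toMul.injective
    rw [toMul_sub]
    show s * (t1 * s⁻¹)⁻¹ = Additive.toMul (χ P00) / t1
    rw [← hs]
    apply Units.ext
    simp only [Units.val_mul, Units.val_div_eq_div_val, Units.val_inv_eq_inv_val]
    field_simp
    try ring
  · show Additive.ofMul (chiFun u B2.1) = χ B2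
    rw [show B2.1 = e4 1 - e4 2 from rfl, chiFun_sub_e4 _ (by decide), hu1, hu2, hB2, map_sub]
    apply Additive.toMul.injective
    rw [toMul_sub]
    show t1 * s⁻¹ * (t2 * s⁻¹)⁻¹ = t1 / t2
    apply Units.ext
    simp only [Units.val_mul, Units.val_div_eq_div_val, Units.val_inv_eq_inv_val]
    field_simp
    try ring
  · show Additive.ofMul (chiFun u B3.1) = χ B3
    rw [show B3.1 = e4 2 - e4 3 from rfl, chiFun_sub_e4 _ (by decide), hu2, hu3, hB3, map_sub]
    apply Additive.toMul.injective
    rw [toMul_sub]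
    show t2 * s⁻¹ * (t3 * s⁻¹)⁻¹ = t2 / t3
    apply Units.ext
    simp only [Units.val_mul, Units.val_div_eq_div_val, Units.val_inv_eq_inv_val]
    field_simp
    try ring
  · show Additive.ofMul (chiFun u B4.1) = χ B4
    rw [show B4.1 = e4 2 + e4 3 from rfl, chiFun_add_e4 _ (by decide), hu2, hu3, hB4,
      map_sub, map_add]
    apply Additive.toMul.injective
    rw [toMul_sub, toMul_add]
    show t2 * s⁻¹ * (t3 * s⁻¹) = t2 * t3 / Additive.toMul (χ P00)
    rw [← hs]
    apply Units.ext
    simp only [Units.val_mul, Units.val_div_eq_div_val, Units.val_inv_eq_inv_val]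
    field_simp
    try ring

noncomputable def Feq (a : ℂˣ) : CStar4Quot ≃ Tc :=
  Equiv.ofBijective (Fmap a) ⟨Fmap_inj a, Fmap_surj a⟩

lemma Feq_apply (a : ℂˣ) (z : Fin 4 → ℂˣ) :
    Feq a (Quotient.mk negSetoid z) = chi (fun i => z i * a⁻¹) := rfl

end WF4Aux
namespace WF4Aux

noncomputable def permT (x : WF4) : Equiv.Perm Tc where
  toFun χ := χ.comp (resHom x⁻¹)
  invFun χ := χ.comp (resHom x)
  left_inv χ := by
    apply AddMonoidHom.ext; intro v
    show χ (resHom x⁻¹ (resHom x v)) = χ v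
    rw [resHom_inv_left]
  right_inv χ := by
    apply AddMonoidHom.ext; intro v
    show χ (resHom x (resHom x⁻¹ v)) = χ v
    rw [resHom_inv_right]

lemma permT_apply (x : WF4) (χ : Tc) (v : Lc) : permT x χ v = χ (resHom x⁻¹ v) := rfl

lemma permT_one : permT 1 = 1 := by
  apply Equiv.ext; intro χ; apply AddMonoidHom.ext; intro v
  show χ (resHom 1⁻¹ v) = χ v
  rw [inv_one, resHom_one_apply]

lemma permT_mul (x y : WF4) : permT (x * y) = permT x * permT y := by
  apply Equiv.ext; intro χ; apply AddMonoidHom.ext; intro v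
  show χ (resHom (x * y)⁻¹ v) = χ (resHom y⁻¹ (resHom x⁻¹ v))
  rw [mul_inv_rev, resHom_mul_apply]

noncomputable def Phi (a : ℂˣ) : WF4 →* Equiv.Perm CStar4Quot where
  toFun x := (Feq a).symm.permCongr (permT x)
  map_one' := by
    apply Equiv.ext; intro q
    simp [Equiv.permCongr_apply, permT_one]
  map_mul' x y := by
    apply Equiv.ext; intro q
    simp [Equiv.permCongr_apply, permT_mul]

lemma Phi_apply (a : ℂˣ) (x : WF4) (q : CStar4Quot) :
    Phi a x q = (Feq a).symm (permT x (Feq a q)) := by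
  simp [Phi, Equiv.permCongr_apply]

noncomputable def expChar (c : Fin 4 → ℝ) : Tc :=
  AddMonoidHom.mk' (fun v => Additive.ofMul (Units.mk0
      (Complex.exp ((c 0 * v.1 0 + c 1 * v.1 1 + c 2 * v.1 2 + c 3 * v.1 3 : ℝ) : ℂ))
      (Complex.exp_ne_zero _))) (by
    intro p q
    apply congrArg Additive.ofMul
    apply Units.ext
    show Complex.exp _ = Complex.exp _ * Complex.exp _
    rw [← Complex.exp_add]
    congr 1
    push_cast [coord_add']
    ring)

lemma expChar_apply (c : Fin 4 → ℝ) (v : Lc) :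
    Additive.toMul (expChar c v)
      = Units.mk0 (Complex.exp ((c 0 * v.1 0 + c 1 * v.1 1 + c 2 * v.1 2 + c 3 * v.1 3 : ℝ) : ℂ))
        (Complex.exp_ne_zero _) := rfl

lemma basis_decomp (β : E4) : β = β 0 • e4 0 + β 1 • e4 1 + β 2 • e4 2 + β 3 • e4 3 := by
  apply vec_ext; intro i
  fin_cases i <;>
    simp [coord_add', PiLp.smul_apply, e4_apply]

set_option maxHeartbeats 1000000 in
lemma Phi_inj (a : ℂˣ) : Function.Injective (Phi a) := by
  rw [injective_iff_map_eq_one]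
  intro x hx
  have hpermT : permT x = 1 := by
    have hone : (Feq a).symm.permCongr (1 : Equiv.Perm Tc) = 1 := by
      apply Equiv.ext; intro q
      simp [Equiv.permCongr_apply]
    have hx' : (Feq a).symm.permCongr (permT x) = 1 := hx
    exact (Feq a).symm.permCongr.injective (hx'.trans hone.symm)
  have hval : ∀ (χ : Tc) (v : Lc), χ (resHom x⁻¹ v) = χ v := by
    intro χ v
    have := congrFun (congrArg (fun (p : Equiv.Perm Tc) => (p χ : Lc → Additive ℂˣ)) hpermT) v
    simpa [permT_apply] using this
  have hfix : ∀ v : Lc, ((x⁻¹ : WF4) : E4 ≃ₗ[ℝ] E4) v.1 = v.1 := by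
    intro v
    set w : E4 := ((x⁻¹ : WF4) : E4 ≃ₗ[ℝ] E4) v.1 with hwdef
    set d : Fin 4 → ℝ := fun i => w i - v.1 i with hd
    have hdi : ∀ i, d i = w i - v.1 i := fun i => rfl
    have hdval := hval (expChar d) v
    have hres : (resHom x⁻¹ v).1 = w := rfl
    have hexp : Real.exp (d 0 * w 0 + d 1 * w 1 + d 2 * w 2 + d 3 * w 3)
        = Real.exp (d 0 * v.1 0 + d 1 * v.1 1 + d 2 * v.1 2 + d 3 * v.1 3) := by
      have h2 := congrArg (fun t => (Additive.toMul t : ℂˣ).val) hdval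
      simp only [expChar_apply, Units.val_mk0, hres] at h2
      rw [← Complex.ofReal_exp, ← Complex.ofReal_exp] at h2
      exact_mod_cast h2
    have hs : d 0 * w 0 + d 1 * w 1 + d 2 * w 2 + d 3 * w 3
        = d 0 * v.1 0 + d 1 * v.1 1 + d 2 * v.1 2 + d 3 * v.1 3 := Real.exp_injective hexp
    have hzero : d 0 * d 0 + d 1 * d 1 + d 2 * d 2 + d 3 * d 3 = 0 := by
      rw [hdi 0, hdi 1, hdi 2, hdi 3]
      rw [hdi 0, hdi 1, hdi 2, hdi 3] at hs
      linear_combination hs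
    have h0 := mul_self_nonneg (d 0)
    have h1 := mul_self_nonneg (d 1)
    have h2 := mul_self_nonneg (d 2)
    have h3 := mul_self_nonneg (d 3)
    have hd0 : d 0 = 0 := mul_self_eq_zero.mp (by linarith)
    have hd1 : d 1 = 0 := mul_self_eq_zero.mp (by linarith)
    have hd2 : d 2 = 0 := mul_self_eq_zero.mp (by linarith)
    have hd3 : d 3 = 0 := mul_self_eq_zero.mp (by linarith)
    apply vec_ext; intro i
    fin_cases i
    · exact sub_eq_zero.mp hd0
    · exact sub_eq_zero.mp hd1
    · exact sub_eq_zero.mp hd2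
    · exact sub_eq_zero.mp hd3
  have hbasis : ∀ j : Fin 4, ((x⁻¹ : WF4) : E4 ≃ₗ[ℝ] E4) (e4 j) = e4 j := by
    intro j
    have h2 : ((x⁻¹ : WF4) : E4 ≃ₗ[ℝ] E4) (e4 j + e4 j) = e4 j + e4 j :=
      hfix ⟨e4 j + e4 j, mem_Lc_two_e4 j⟩
    have h3 : e4 j = (1 / 2 : ℝ) • (e4 j + e4 j) := by
      rw [← two_smul ℝ (e4 j), smul_smul]; norm_num
    rw [h3, map_smul, h2]
  have hall : ∀ β : E4, ((x⁻¹ : WF4) : E4 ≃ₗ[ℝ] E4) β = β := by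
    intro β
    conv_lhs => rw [basis_decomp β]
    rw [map_add, map_add, map_add, map_smul, map_smul, map_smul, map_smul,
      hbasis, hbasis, hbasis, hbasis]
    exact (basis_decomp β).symm
  apply Subtype.ext
  apply LinearEquiv.ext
  intro β
  have : ((x⁻¹ : WF4) : E4 ≃ₗ[ℝ] E4) ((x : E4 ≃ₗ[ℝ] E4) β) = (x : E4 ≃ₗ[ℝ] E4) β := hall _
  have h4 : ((x⁻¹ : WF4) : E4 ≃ₗ[ℝ] E4) ((x : E4 ≃ₗ[ℝ] E4) β) = β :=
    (x : E4 ≃ₗ[ℝ] E4).symm_apply_apply β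
  rw [h4] at this
  exact this.symm

end WF4Aux
namespace WF4Aux

lemma ne_zero_of_coord {x : E4} {i : Fin 4} (h : x i ≠ 0) : x ≠ 0 := by
  intro h0; rw [h0] at h; exact h rfl

lemma forall_coords {w : E4} {n : Fin 4 → ℤ} (h0 : w 0 = (n 0 : ℝ)) (h1 : w 1 = (n 1 : ℝ))
    (h2 : w 2 = (n 2 : ℝ)) (h3 : w 3 = (n 3 : ℝ)) : ∀ i, w i = (n i : ℝ) := by
  intro i; fin_cases i; exacts [h0, h1, h2, h3]

lemma Phi_mk_eq (a : ℂˣ) (x : WF4) (z z' : Fin 4 → ℂˣ)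
    (h : (chi (fun i => z i * a⁻¹)).comp (resHom x⁻¹) = chi (fun i => z' i * a⁻¹)) :
    Phi a x (Quotient.mk negSetoid z) = Quotient.mk negSetoid z' := by
  refine (Phi_apply a x _).trans ((Equiv.symm_apply_eq _).mpr ?_)
  exact h

lemma Phi_gen1 (a : ℂˣ) (g : E4 ≃ₗ[ℝ] E4) (hg : g ∈ WF4)
    (hform : ∀ β, g β = β - (2 * ⟪e4 0 - e4 1, β⟫ / ⟪e4 0 - e4 1, e4 0 - e4 1⟫) • (e4 0 - e4 1))
    (z : Fin 4 → ℂˣ) :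
    Phi a ⟨g, hg⟩ (Quotient.mk negSetoid z)
      = Quotient.mk negSetoid (z ∘ Equiv.swap 0 1) := by
  apply Phi_mk_eq
  set u : Fin 4 → ℂˣ := fun i => z i * a⁻¹ with hu
  have hα : (e4 0 - e4 1 : E4) ≠ 0 :=
    ne_zero_of_coord (i := 0) (by simp [coord_sub, e4_apply] <;> norm_num)
  have hsq := refl_sq hα hform
  have hginv : ∀ β, g.symm β = g β := by
    intro β
    conv_lhs => rw [← hsq β]
    exact g.symm_apply_apply _
  have hu' : (fun i => (z ∘ Equiv.swap 0 1) i * a⁻¹) = u ∘ Equiv.swap 0 1 := rfl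
  rw [hu']
  have hαα : ⟪(e4 0 - e4 1 : E4), (e4 0 - e4 1 : E4)⟫ = 2 := by
    rw [inner4]; simp [coord_sub, e4_apply] <;> norm_num
  have hres : ∀ w : Lc, ((resHom (⟨g, hg⟩ : WF4)⁻¹) w).1 = g.symm w.1 := fun w => rfl
  apply chi_ext <;>
    rw [AddMonoidHom.comp_apply, chi_apply, chi_apply, hres, hginv, hform] <;>
    apply congrArg Additive.ofMul
  · rw [show (B1 : E4) = e4 0 - e4 1 from rfl]
    rw [show 2 * ⟪(e4 0 - e4 1 : E4), (e4 0 - e4 1 : E4)⟫ / ⟪(e4 0 - e4 1 : E4), (e4 0 - e4 1 : E4)⟫ = 2 by rw [hαα]; norm_num]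
    rw [chiFun_eval u _ ![-1, 1, 0, 0] (forall_coords
      (by simp [coord_sub, PiLp.smul_apply, e4_apply] <;> norm_num)
      (by simp [coord_sub, PiLp.smul_apply, e4_apply] <;> norm_num)
      (by simp [coord_sub, PiLp.smul_apply, e4_apply] <;> norm_num)
      (by simp [coord_sub, PiLp.smul_apply, e4_apply] <;> norm_num))]
    rw [chiFun_sub_e4 _ (by decide)]
    simp [Equiv.swap_apply_left, Equiv.swap_apply_right]
    exact mul_comm _ _
  · rw [show (B2 : E4) = e4 1 - e4 2 from rfl]
    have hib : ⟪(e4 0 - e4 1 : E4), (e4 1 - e4 2 : E4)⟫ = -1 := by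
      rw [inner4]; simp [coord_sub, e4_apply] <;> norm_num
    rw [show 2 * ⟪(e4 0 - e4 1 : E4), (e4 1 - e4 2 : E4)⟫ / ⟪(e4 0 - e4 1 : E4), (e4 0 - e4 1 : E4)⟫ = -1 by rw [hαα, hib]; norm_num]
    rw [chiFun_eval u _ ![1, 0, -1, 0] (forall_coords
      (by simp [coord_sub, PiLp.smul_apply, e4_apply] <;> norm_num)
      (by simp [coord_sub, PiLp.smul_apply, e4_apply] <;> norm_num)
      (by simp [coord_sub, PiLp.smul_apply, e4_apply] <;> norm_num)
      (by simp [coord_sub, PiLp.smul_apply, e4_apply] <;> norm_num))]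
    rw [chiFun_sub_e4 _ (by decide)]
    simp [Equiv.swap_apply_left, Equiv.swap_apply_right, Equiv.swap_apply_of_ne_of_ne]
  · rw [show (B3 : E4) = e4 2 - e4 3 from rfl]
    have hib : ⟪(e4 0 - e4 1 : E4), (e4 2 - e4 3 : E4)⟫ = 0 := by
      rw [inner4]; simp [coord_sub, e4_apply] <;> norm_num
    rw [show 2 * ⟪(e4 0 - e4 1 : E4), (e4 2 - e4 3 : E4)⟫ / ⟪(e4 0 - e4 1 : E4), (e4 0 - e4 1 : E4)⟫ = 0 by rw [hαα, hib]; norm_num]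
    rw [zero_smul, sub_zero]
    rw [chiFun_sub_e4 _ (by decide), chiFun_sub_e4 _ (by decide)]
    simp [Equiv.swap_apply_of_ne_of_ne]
  · rw [show (B4 : E4) = e4 2 + e4 3 from rfl]
    have hib : ⟪(e4 0 - e4 1 : E4), (e4 2 + e4 3 : E4)⟫ = 0 := by
      rw [inner4]; simp [coord_sub, coord_add', e4_apply] <;> norm_num
    rw [show 2 * ⟪(e4 0 - e4 1 : E4), (e4 2 + e4 3 : E4)⟫ / ⟪(e4 0 - e4 1 : E4), (e4 0 - e4 1 : E4)⟫ = 0 by rw [hαα, hib]; norm_num]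
    rw [zero_smul, sub_zero]
    rw [chiFun_add_e4 _ (by decide), chiFun_add_e4 _ (by decide)]
    simp [Equiv.swap_apply_of_ne_of_ne]

end WF4Aux
namespace WF4Aux

lemma Phi_gen2 (a : ℂˣ) (g : E4 ≃ₗ[ℝ] E4) (hg : g ∈ WF4)
    (hform : ∀ β, g β = β - (2 * ⟪e4 1 - e4 2, β⟫ / ⟪e4 1 - e4 2, e4 1 - e4 2⟫) • (e4 1 - e4 2))
    (z : Fin 4 → ℂˣ) :
    Phi a ⟨g, hg⟩ (Quotient.mk negSetoid z)
      = Quotient.mk negSetoid (z ∘ Equiv.swap 1 2) := by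
  apply Phi_mk_eq
  set u : Fin 4 → ℂˣ := fun i => z i * a⁻¹ with hu
  have hα : (e4 1 - e4 2 : E4) ≠ 0 :=
    ne_zero_of_coord (i := 1) (by simp [coord_sub, e4_apply] <;> norm_num)
  have hsq := refl_sq hα hform
  have hginv : ∀ β, g.symm β = g β := by
    intro β
    conv_lhs => rw [← hsq β]
    exact g.symm_apply_apply _
  have hu' : (fun i => (z ∘ Equiv.swap 1 2) i * a⁻¹) = u ∘ Equiv.swap 1 2 := rfl
  rw [hu']
  have hαα : ⟪(e4 1 - e4 2 : E4), (e4 1 - e4 2 : E4)⟫ = 2 := by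
    rw [inner4]; simp [coord_sub, e4_apply] <;> norm_num
  have hres : ∀ w : Lc, ((resHom (⟨g, hg⟩ : WF4)⁻¹) w).1 = g.symm w.1 := fun w => rfl
  apply chi_ext <;>
    rw [AddMonoidHom.comp_apply, chi_apply, chi_apply, hres, hginv, hform] <;>
    apply congrArg Additive.ofMul
  · rw [show (B1 : E4) = e4 0 - e4 1 from rfl]
    have hib : ⟪(e4 1 - e4 2 : E4), (e4 0 - e4 1 : E4)⟫ = -1 := by
      rw [inner4]; simp [coord_sub, e4_apply] <;> norm_num
    rw [show 2 * ⟪(e4 1 - e4 2 : E4), (e4 0 - e4 1 : E4)⟫ / ⟪(e4 1 - e4 2 : E4), (e4 1 - e4 2 : E4)⟫ = -1 by rw [hαα, hib]; norm_num]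
    rw [chiFun_eval u _ ![1, 0, -1, 0] (forall_coords
      (by simp [coord_sub, PiLp.smul_apply, e4_apply] <;> norm_num)
      (by simp [coord_sub, PiLp.smul_apply, e4_apply] <;> norm_num)
      (by simp [coord_sub, PiLp.smul_apply, e4_apply] <;> norm_num)
      (by simp [coord_sub, PiLp.smul_apply, e4_apply] <;> norm_num))]
    rw [chiFun_sub_e4 _ (by decide)]
    simp [Equiv.swap_apply_left, Equiv.swap_apply_right, Equiv.swap_apply_of_ne_of_ne]
  · rw [show (B2 : E4) = e4 1 - e4 2 from rfl]
    rw [show 2 * ⟪(e4 1 - e4 2 : E4), (e4 1 - e4 2 : E4)⟫ / ⟪(e4 1 - e4 2 : E4), (e4 1 - e4 2 : E4)⟫ = 2 by rw [hαα]; norm_num]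
    rw [chiFun_eval u _ ![0, -1, 1, 0] (forall_coords
      (by simp [coord_sub, PiLp.smul_apply, e4_apply] <;> norm_num)
      (by simp [coord_sub, PiLp.smul_apply, e4_apply] <;> norm_num)
      (by simp [coord_sub, PiLp.smul_apply, e4_apply] <;> norm_num)
      (by simp [coord_sub, PiLp.smul_apply, e4_apply] <;> norm_num))]
    rw [chiFun_sub_e4 _ (by decide)]
    simp [Equiv.swap_apply_left, Equiv.swap_apply_right]
    exact mul_comm _ _
  · rw [show (B3 : E4) = e4 2 - e4 3 from rfl]
    have hib : ⟪(e4 1 - e4 2 : E4), (e4 2 - e4 3 : E4)⟫ = -1 := by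
      rw [inner4]; simp [coord_sub, e4_apply] <;> norm_num
    rw [show 2 * ⟪(e4 1 - e4 2 : E4), (e4 2 - e4 3 : E4)⟫ / ⟪(e4 1 - e4 2 : E4), (e4 1 - e4 2 : E4)⟫ = -1 by rw [hαα, hib]; norm_num]
    rw [chiFun_eval u _ ![0, 1, 0, -1] (forall_coords
      (by simp [coord_sub, PiLp.smul_apply, e4_apply] <;> norm_num)
      (by simp [coord_sub, PiLp.smul_apply, e4_apply] <;> norm_num)
      (by simp [coord_sub, PiLp.smul_apply, e4_apply] <;> norm_num)
      (by simp [coord_sub, PiLp.smul_apply, e4_apply] <;> norm_num))]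
    rw [chiFun_sub_e4 _ (by decide)]
    simp [Equiv.swap_apply_left, Equiv.swap_apply_right, Equiv.swap_apply_of_ne_of_ne]
  · rw [show (B4 : E4) = e4 2 + e4 3 from rfl]
    have hib : ⟪(e4 1 - e4 2 : E4), (e4 2 + e4 3 : E4)⟫ = -1 := by
      rw [inner4]; simp [coord_sub, coord_add', e4_apply] <;> norm_num
    rw [show 2 * ⟪(e4 1 - e4 2 : E4), (e4 2 + e4 3 : E4)⟫ / ⟪(e4 1 - e4 2 : E4), (e4 1 - e4 2 : E4)⟫ = -1 by rw [hαα, hib]; norm_num]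
    rw [chiFun_eval u _ ![0, 1, 0, 1] (forall_coords
      (by simp [coord_sub, coord_add', PiLp.smul_apply, e4_apply] <;> norm_num)
      (by simp [coord_sub, coord_add', PiLp.smul_apply, e4_apply] <;> norm_num)
      (by simp [coord_sub, coord_add', PiLp.smul_apply, e4_apply] <;> norm_num)
      (by simp [coord_sub, coord_add', PiLp.smul_apply, e4_apply] <;> norm_num))]
    rw [chiFun_add_e4 _ (by decide)]
    simp [Equiv.swap_apply_left, Equiv.swap_apply_right, Equiv.swap_apply_of_ne_of_ne]

end WF4Aux
namespace WF4Aux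

set_option maxHeartbeats 1000000 in
lemma Phi_gen3 (a : ℂˣ) (g : E4 ≃ₗ[ℝ] E4) (hg : g ∈ WF4)
    (hform : ∀ β, g β = β - (2 * ⟪-e4 0, β⟫ / ⟪-e4 0, -e4 0⟫) • (-e4 0))
    (z : Fin 4 → ℂˣ) :
    Phi a ⟨g, hg⟩ (Quotient.mk negSetoid z)
      = Quotient.mk negSetoid (Function.update z 0 ((a ^ 2) * (z 0)⁻¹)) := by
  apply Phi_mk_eq
  set u : Fin 4 → ℂˣ := fun i => z i * a⁻¹ with hu
  have hα : (-e4 0 : E4) ≠ 0 :=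
    ne_zero_of_coord (i := 0) (by simp [PiLp.neg_apply, e4_apply] <;> norm_num)
  have hsq := refl_sq hα hform
  have hginv : ∀ β, g.symm β = g β := by
    intro β
    conv_lhs => rw [← hsq β]
    exact g.symm_apply_apply _
  have hαα : ⟪(-e4 0 : E4), (-e4 0 : E4)⟫ = 1 := by
    rw [inner4]; simp [PiLp.neg_apply, e4_apply] <;> norm_num
  have hres : ∀ w : Lc, ((resHom (⟨g, hg⟩ : WF4)⁻¹) w).1 = g.symm w.1 := fun w => rfl
  apply chi_ext <;>
    rw [AddMonoidHom.comp_apply, chi_apply, chi_apply, hres, hginv, hform] <;>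
    apply congrArg Additive.ofMul
  · rw [show (B1 : E4) = e4 0 - e4 1 from rfl]
    have hib : ⟪(-e4 0 : E4), (e4 0 - e4 1 : E4)⟫ = -1 := by
      rw [inner4]; simp [PiLp.neg_apply, coord_sub, e4_apply] <;> norm_num
    rw [show 2 * ⟪(-e4 0 : E4), (e4 0 - e4 1 : E4)⟫ / ⟪(-e4 0 : E4), (-e4 0 : E4)⟫ = -2 by rw [hαα, hib]; norm_num]
    rw [chiFun_eval u _ ![-1, -1, 0, 0] (forall_coords
      (by simp [coord_sub, PiLp.smul_apply, PiLp.neg_apply, e4_apply] <;> norm_num)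
      (by simp [coord_sub, PiLp.smul_apply, PiLp.neg_apply, e4_apply] <;> norm_num)
      (by simp [coord_sub, PiLp.smul_apply, PiLp.neg_apply, e4_apply] <;> norm_num)
      (by simp [coord_sub, PiLp.smul_apply, PiLp.neg_apply, e4_apply] <;> norm_num))]
    rw [chiFun_sub_e4 _ (by decide)]
    apply Units.ext
    simp [hu, Units.val_mul, Units.val_inv_eq_inv_val, Function.update_self,
      Function.update_of_ne, Units.val_pow_eq_pow_val]
    try field_simp
    try ring
  · rw [show (B2 : E4) = e4 1 - e4 2 from rfl]
    have hib : ⟪(-e4 0 : E4), (e4 1 - e4 2 : E4)⟫ = 0 := by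
      rw [inner4]; simp [PiLp.neg_apply, coord_sub, e4_apply] <;> norm_num
    rw [show 2 * ⟪(-e4 0 : E4), (e4 1 - e4 2 : E4)⟫ / ⟪(-e4 0 : E4), (-e4 0 : E4)⟫ = 0 by rw [hαα, hib]; norm_num]
    rw [zero_smul, sub_zero, chiFun_sub_e4 _ (by decide), chiFun_sub_e4 _ (by decide)]
    apply Units.ext
    simp [hu, Units.val_mul, Units.val_inv_eq_inv_val, Function.update_self,
      Function.update_of_ne, Units.val_pow_eq_pow_val]
    try field_simp
    try ring
  · rw [show (B3 : E4) = e4 2 - e4 3 from rfl]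
    have hib : ⟪(-e4 0 : E4), (e4 2 - e4 3 : E4)⟫ = 0 := by
      rw [inner4]; simp [PiLp.neg_apply, coord_sub, e4_apply] <;> norm_num
    rw [show 2 * ⟪(-e4 0 : E4), (e4 2 - e4 3 : E4)⟫ / ⟪(-e4 0 : E4), (-e4 0 : E4)⟫ = 0 by rw [hαα, hib]; norm_num]
    rw [zero_smul, sub_zero, chiFun_sub_e4 _ (by decide), chiFun_sub_e4 _ (by decide)]
    apply Units.ext
    simp [hu, Units.val_mul, Units.val_inv_eq_inv_val, Function.update_self,
      Function.update_of_ne, Units.val_pow_eq_pow_val]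
    try field_simp
    try ring
  · rw [show (B4 : E4) = e4 2 + e4 3 from rfl]
    have hib : ⟪(-e4 0 : E4), (e4 2 + e4 3 : E4)⟫ = 0 := by
      rw [inner4]; simp [PiLp.neg_apply, coord_add', e4_apply] <;> norm_num
    rw [show 2 * ⟪(-e4 0 : E4), (e4 2 + e4 3 : E4)⟫ / ⟪(-e4 0 : E4), (-e4 0 : E4)⟫ = 0 by rw [hαα, hib]; norm_num]
    rw [zero_smul, sub_zero, chiFun_add_e4 _ (by decide), chiFun_add_e4 _ (by decide)]
    apply Units.ext
    simp [hu, Units.val_mul, Units.val_inv_eq_inv_val, Function.update_self,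
      Function.update_of_ne, Units.val_pow_eq_pow_val]
    try field_simp
    try ring

set_option maxHeartbeats 1000000 in
lemma Phi_gen4 (a : ℂˣ) (g : E4 ≃ₗ[ℝ] E4) (hg : g ∈ WF4)
    (hform : ∀ β, g β = β - (2 * ⟪(1/2 : ℝ) • (e4 0 + e4 1 + e4 2 + e4 3), β⟫
        / ⟪(1/2 : ℝ) • (e4 0 + e4 1 + e4 2 + e4 3), (1/2 : ℝ) • (e4 0 + e4 1 + e4 2 + e4 3)⟫)
        • ((1/2 : ℝ) • (e4 0 + e4 1 + e4 2 + e4 3)))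
    (z : Fin 4 → ℂˣ) (s : ℂˣ) (hs : s ^ 2 = z 0 * z 1 * z 2 * z 3) :
    Phi a ⟨g, hg⟩ (Quotient.mk negSetoid z)
      = Quotient.mk negSetoid (fun j => a ^ 2 * z j * s⁻¹) := by
  apply Phi_mk_eq
  set δ : E4 := (1/2 : ℝ) • (e4 0 + e4 1 + e4 2 + e4 3) with hδ
  set u : Fin 4 → ℂˣ := fun i => z i * a⁻¹ with hu
  have hsC : (s : ℂ) * (s : ℂ) = (z 0 : ℂ) * z 1 * z 2 * z 3 := by
    have := congrArg Units.val hs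
    push_cast at this
    rw [← this]; ring
  have hδc : ∀ i, δ i = 1/2 := by
    intro i; fin_cases i <;>
      simp [hδ, PiLp.smul_apply, coord_add', e4_apply] <;> norm_num
  have hα : δ ≠ 0 :=
    ne_zero_of_coord (i := 0) (by rw [hδc 0]; norm_num)
  have hsq := refl_sq hα hform
  have hginv : ∀ β, g.symm β = g β := by
    intro β
    conv_lhs => rw [← hsq β]
    exact g.symm_apply_apply _
  have hαα : ⟪δ, δ⟫ = 1 := by
    rw [inner4, hδc 0, hδc 1, hδc 2, hδc 3]; norm_num
  have hres : ∀ w : Lc, ((resHom (⟨g, hg⟩ : WF4)⁻¹) w).1 = g.symm w.1 := fun w => rfl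
  apply chi_ext <;>
    rw [AddMonoidHom.comp_apply, chi_apply, chi_apply, hres, hginv, hform] <;>
    apply congrArg Additive.ofMul
  · rw [show (B1 : E4) = e4 0 - e4 1 from rfl]
    have hib : ⟪δ, (e4 0 - e4 1 : E4)⟫ = 0 := by
      rw [inner4, hδc 0, hδc 1, hδc 2, hδc 3]
      simp [coord_sub, e4_apply] <;> norm_num
    rw [show 2 * ⟪δ, (e4 0 - e4 1 : E4)⟫ / ⟪δ, δ⟫ = 0 by rw [hαα, hib]; norm_num]
    rw [zero_smul, sub_zero, chiFun_sub_e4 _ (by decide), chiFun_sub_e4 _ (by decide)]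
    apply Units.ext
    simp [hu, Units.val_mul, Units.val_inv_eq_inv_val, Units.val_pow_eq_pow_val]
    try field_simp
    try ring
  · rw [show (B2 : E4) = e4 1 - e4 2 from rfl]
    have hib : ⟪δ, (e4 1 - e4 2 : E4)⟫ = 0 := by
      rw [inner4, hδc 0, hδc 1, hδc 2, hδc 3]
      simp [coord_sub, e4_apply] <;> norm_num
    rw [show 2 * ⟪δ, (e4 1 - e4 2 : E4)⟫ / ⟪δ, δ⟫ = 0 by rw [hαα, hib]; norm_num]
    rw [zero_smul, sub_zero, chiFun_sub_e4 _ (by decide), chiFun_sub_e4 _ (by decide)]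
    apply Units.ext
    simp [hu, Units.val_mul, Units.val_inv_eq_inv_val, Units.val_pow_eq_pow_val]
    try field_simp
    try ring
  · rw [show (B3 : E4) = e4 2 - e4 3 from rfl]
    have hib : ⟪δ, (e4 2 - e4 3 : E4)⟫ = 0 := by
      rw [inner4, hδc 0, hδc 1, hδc 2, hδc 3]
      simp [coord_sub, e4_apply] <;> norm_num
    rw [show 2 * ⟪δ, (e4 2 - e4 3 : E4)⟫ / ⟪δ, δ⟫ = 0 by rw [hαα, hib]; norm_num]
    rw [zero_smul, sub_zero, chiFun_sub_e4 _ (by decide), chiFun_sub_e4 _ (by decide)]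
    apply Units.ext
    simp [hu, Units.val_mul, Units.val_inv_eq_inv_val, Units.val_pow_eq_pow_val]
    try field_simp
    try ring
  · rw [show (B4 : E4) = e4 2 + e4 3 from rfl]
    have hib : ⟪δ, (e4 2 + e4 3 : E4)⟫ = 1 := by
      rw [inner4, hδc 0, hδc 1, hδc 2, hδc 3]
      simp [coord_add', e4_apply] <;> norm_num
    rw [show 2 * ⟪δ, (e4 2 + e4 3 : E4)⟫ / ⟪δ, δ⟫ = 2 by rw [hαα, hib]; norm_num]
    rw [chiFun_eval u _ ![-1, -1, 0, 0] (forall_coords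
      (by rw [coord_sub, PiLp.smul_apply, hδc 0]; simp [coord_add', e4_apply] <;> norm_num)
      (by rw [coord_sub, PiLp.smul_apply, hδc 1]; simp [coord_add', e4_apply] <;> norm_num)
      (by rw [coord_sub, PiLp.smul_apply, hδc 2]; simp [coord_add', e4_apply] <;> norm_num)
      (by rw [coord_sub, PiLp.smul_apply, hδc 3]; simp [coord_add', e4_apply] <;> norm_num))]
    rw [chiFun_add_e4 _ (by decide)]
    apply Units.ext
    simp [hu, Units.val_mul, Units.val_inv_eq_inv_val, Units.val_pow_eq_pow_val]
    try field_simp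
    linear_combination hsC

end WF4Aux

/-- For any nonzero constant `A`, the multiplicative action of `W(F₄)` on `(ℂ*)⁴/∼`,
given on the simple reflections by: `s_{e₁−e₂}` swaps `z₁, z₂`; `s_{e₂−e₃}` swaps
`z₂, z₃`; `s_{−e₁}` maps `z₁ ↦ A/z₁`; and `s_{(e₁+e₂+e₃+e₄)/2}` maps each
`z_j ↦ A z_j / √(z₁z₂z₃z₄)` (for either choice of the square root), is a well-defined
faithful group action: there is an injective group homomorphism `W(F₄) → Perm((ℂ*)⁴/∼)`
whose values on the simple reflections are the indicated maps. -/
theorem WF4_multiplicative_action_faithful (A : ℂˣ) :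
    ∃ φ : WF4 →* Equiv.Perm CStar4Quot,
      Function.Injective φ ∧
      (∀ (g : EuclideanSpace ℝ (Fin 4) ≃ₗ[ℝ] EuclideanSpace ℝ (Fin 4)) (hg : g ∈ WF4),
        (∀ β, g β = β - (2 * ⟪e4 0 - e4 1, β⟫ / ⟪e4 0 - e4 1, e4 0 - e4 1⟫) • (e4 0 - e4 1)) →
        ∀ z : Fin 4 → ℂˣ,
          φ ⟨g, hg⟩ (Quotient.mk negSetoid z)
            = Quotient.mk negSetoid (z ∘ Equiv.swap 0 1)) ∧
      (∀ (g : EuclideanSpace ℝ (Fin 4) ≃ₗ[ℝ] EuclideanSpace ℝ (Fin 4)) (hg : g ∈ WF4),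
        (∀ β, g β = β - (2 * ⟪e4 1 - e4 2, β⟫ / ⟪e4 1 - e4 2, e4 1 - e4 2⟫) • (e4 1 - e4 2)) →
        ∀ z : Fin 4 → ℂˣ,
          φ ⟨g, hg⟩ (Quotient.mk negSetoid z)
            = Quotient.mk negSetoid (z ∘ Equiv.swap 1 2)) ∧
      (∀ (g : EuclideanSpace ℝ (Fin 4) ≃ₗ[ℝ] EuclideanSpace ℝ (Fin 4)) (hg : g ∈ WF4),
        (∀ β, g β = β - (2 * ⟪-e4 0, β⟫ / ⟪-e4 0, -e4 0⟫) • (-e4 0)) →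
        ∀ z : Fin 4 → ℂˣ,
          φ ⟨g, hg⟩ (Quotient.mk negSetoid z)
            = Quotient.mk negSetoid (Function.update z 0 (A * (z 0)⁻¹))) ∧
      (∀ (g : EuclideanSpace ℝ (Fin 4) ≃ₗ[ℝ] EuclideanSpace ℝ (Fin 4)) (hg : g ∈ WF4),
        (∀ β, let δ := (1 / 2 : ℝ) • (e4 0 + e4 1 + e4 2 + e4 3);
          g β = β - (2 * ⟪δ, β⟫ / ⟪δ, δ⟫) • δ) →
        ∀ (z : Fin 4 → ℂˣ) (s : ℂˣ), s ^ 2 = z 0 * z 1 * z 2 * z 3 →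
          φ ⟨g, hg⟩ (Quotient.mk negSetoid z)
            = Quotient.mk negSetoid (fun j => A * z j * s⁻¹)) := by
  obtain ⟨a, ha⟩ : ∃ a : ℂˣ, a ^ 2 = A := by
    obtain ⟨s, hs⟩ := WF4Aux.exists_sqrt A
    exact ⟨s, by rw [sq]; exact hs⟩
  subst ha
  refine ⟨WF4Aux.Phi a, WF4Aux.Phi_inj a, ?_, ?_, ?_, ?_⟩
  · intro g hg hform z
    exact WF4Aux.Phi_gen1 a g hg hform z
  · intro g hg hform z
    exact WF4Aux.Phi_gen2 a g hg hform z
  · intro g hg hform z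
    exact WF4Aux.Phi_gen3 a g hg hform z
  · intro g hg hform z s hs
    exact WF4Aux.Phi_gen4 a g hg (fun β => hform β) z s hs
end

section
/- Fix |q| < 1, q fixed, z ∈ ℂ nonzero, and α ∈ [0,1]. Then as real p → 0^+, the elliptic gamma function satisfies: lim_{p→0} Γ(p^α z; p,q) = 1/(z;q)_∞ if α = 0 (assuming (z;q)_∞ ≠ 0); lim_{p→0} Γ(p^α z; p,q) = 1 if 0 < α < 1; and lim_{p→0} Γ(pz; p,q) = (q/z; q)_∞ if α = 1. -/
open Filter

/-- The infinite q-shifted factorial `(x;q)_∞`. -/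
noncomputable def qPochInf (x q : ℂ) : ℂ := ∏' r : ℕ, (1 - x * q ^ r)

/-- The double infinite product `(x;p,q) = ∏_{r,s=0}^∞ (1 - x p^r q^s)`. -/
noncomputable def pqPoch (x p q : ℂ) : ℂ := ∏' rs : ℕ × ℕ, (1 - x * p ^ rs.1 * q ^ rs.2)

/-- The elliptic gamma function `Γ(x;p,q) = (pq/x;p,q)/(x;p,q)`. -/
noncomputable def ellGamma (x p q : ℂ) : ℂ := pqPoch (p * q / x) p q / pqPoch x p q

section aux

open Topology

/-- Finset product bound: `‖∏ x - 1‖ ≤ ∏(1+u) - 1`. -/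
lemma aux_prod_sub_one_le {β : Type*} (x : β → ℂ) (u : β → ℝ) (hu : ∀ b, ‖x b - 1‖ ≤ u b)
    (S : Finset β) : ‖(∏ b ∈ S, x b) - 1‖ ≤ (∏ b ∈ S, (1 + u b)) - 1 := by
  have h0 : ∀ b, (0:ℝ) ≤ u b := fun b => (norm_nonneg _).trans (hu b)
  induction S using Finset.cons_induction with
  | empty => simp
  | cons a S ha ih =>
    rw [Finset.prod_cons, Finset.prod_cons]
    have hQ1 : (1:ℝ) ≤ ∏ b ∈ S, (1 + u b) := by
      have : ∏ b ∈ S, (1:ℝ) ≤ ∏ b ∈ S, (1 + u b) :=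
        Finset.prod_le_prod (fun b _ => by norm_num) (fun b _ => by linarith [h0 b])
      simpa using this
    have hP : ‖∏ b ∈ S, x b‖ ≤ ∏ b ∈ S, (1 + u b) := by
      calc ‖∏ b ∈ S, x b‖ = ‖((∏ b ∈ S, x b) - 1) + 1‖ := by ring_nf
        _ ≤ ‖(∏ b ∈ S, x b) - 1‖ + 1 := by
            simpa using norm_add_le ((∏ b ∈ S, x b) - 1) 1
        _ ≤ (∏ b ∈ S, (1 + u b)) - 1 + 1 := by linarith
        _ = ∏ b ∈ S, (1 + u b) := by ring
    calc ‖x a * ∏ b ∈ S, x b - 1‖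
        = ‖(x a - 1) * (∏ b ∈ S, x b) + ((∏ b ∈ S, x b) - 1)‖ := by ring_nf
      _ ≤ ‖(x a - 1) * (∏ b ∈ S, x b)‖ + ‖(∏ b ∈ S, x b) - 1‖ := norm_add_le _ _
      _ ≤ u a * (∏ b ∈ S, (1 + u b)) + ((∏ b ∈ S, (1 + u b)) - 1) := by
          rw [norm_mul]
          have := mul_le_mul (hu a) hP (norm_nonneg _) (h0 a)
          linarith
      _ = (1 + u a) * ∏ b ∈ S, (1 + u b) - 1 := by ring

lemma aux_prod_one_add_le_exp {β : Type*} (u : β → ℝ) (h0 : ∀ b, (0:ℝ) ≤ u b) (S : Finset β) :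
    (∏ b ∈ S, (1 + u b)) ≤ Real.exp (∑ b ∈ S, u b) := by
  rw [Real.exp_sum]
  refine Finset.prod_le_prod (fun b _ => by linarith [h0 b]) fun b _ => by
    simpa [add_comm] using Real.add_one_le_exp (u b)

lemma aux_prod_bound {β : Type*} (x : β → ℂ) (u : β → ℝ) (hu : ∀ b, ‖x b - 1‖ ≤ u b)
    (S : Finset β) : ‖(∏ b ∈ S, x b) - 1‖ ≤ Real.exp (∑ b ∈ S, u b) - 1 := by
  have h0 : ∀ b, (0:ℝ) ≤ u b := fun b => (norm_nonneg _).trans (hu b)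
  have := aux_prod_sub_one_le x u hu S
  have := aux_prod_one_add_le_exp u h0 S
  linarith

lemma aux_norm_prod_le {β : Type*} (x : β → ℂ) (u : β → ℝ) (hu : ∀ b, ‖x b - 1‖ ≤ u b)
    (S : Finset β) : ‖∏ b ∈ S, x b‖ ≤ Real.exp (∑ b ∈ S, u b) := by
  have h0 : ∀ b, (0:ℝ) ≤ u b := fun b => (norm_nonneg _).trans (hu b)
  have h1 := aux_prod_bound x u hu S
  calc ‖∏ b ∈ S, x b‖ = ‖((∏ b ∈ S, x b) - 1) + 1‖ := by ring_nf
    _ ≤ ‖(∏ b ∈ S, x b) - 1‖ + 1 := by simpa using norm_add_le ((∏ b ∈ S, x b) - 1) 1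
    _ ≤ Real.exp (∑ b ∈ S, u b) := by linarith

lemma aux_multipliable {β : Type*} (x : β → ℂ) (u : β → ℝ) (hu : ∀ b, ‖x b - 1‖ ≤ u b)
    (hsum : Summable u) : Multipliable x := by
  classical
  have h0 : ∀ b, (0:ℝ) ≤ u b := fun b => (norm_nonneg _).trans (hu b)
  set C : ℝ := Real.exp (∑' b, u b) with hC
  have hC0 : (0:ℝ) < C := Real.exp_pos _
  have hCb : ∀ S : Finset β, ‖∏ b ∈ S, x b‖ ≤ C := fun S =>
    (aux_norm_prod_le x u hu S).trans
      (Real.exp_le_exp.2 (Summable.sum_le_tsum S (fun b _ => h0 b) hsum))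
  have hcs : CauchySeq (fun s : Finset β => ∏ b ∈ s, x b) := by
    rw [Metric.cauchySeq_iff']
    intro ε hε
    have hη0 : 0 < Real.log (1 + ε / (2 * C)) := Real.log_pos (by
      have := div_pos hε (by positivity : (0:ℝ) < 2 * C); linarith)
    obtain ⟨N, hN⟩ := summable_iff_vanishing.1 hsum
      (Metric.ball 0 (Real.log (1 + ε / (2 * C)))) (Metric.ball_mem_nhds _ hη0)
    have hkey : ∀ s : Finset β, N ⊆ s → dist (∏ b ∈ s, x b) (∏ b ∈ N, x b) ≤ ε / 2 := by
      intro s hNs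
      have hsplit : (∏ b ∈ s \ N, x b) * ∏ b ∈ N, x b = ∏ b ∈ s, x b :=
        Finset.prod_sdiff hNs
      have hdisj : Disjoint (s \ N) N := Finset.sdiff_disjoint
      have hsum2 := hN (s \ N) hdisj
      rw [Metric.mem_ball, Real.dist_eq, sub_zero] at hsum2
      have h3 : ∑ b ∈ s \ N, u b < Real.log (1 + ε / (2 * C)) :=
        (le_abs_self _).trans_lt hsum2
      have h4 : Real.exp (∑ b ∈ s \ N, u b) ≤ 1 + ε / (2 * C) := by
        calc Real.exp (∑ b ∈ s \ N, u b) ≤ Real.exp (Real.log (1 + ε / (2 * C))) :=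
              Real.exp_le_exp.2 h3.le
          _ = 1 + ε / (2 * C) := Real.exp_log (by positivity)
      have h5 : ‖(∏ b ∈ s \ N, x b) - 1‖ ≤ ε / (2 * C) := by
        have := aux_prod_bound x u hu (s \ N)
        linarith
      calc dist (∏ b ∈ s, x b) (∏ b ∈ N, x b)
          = ‖(∏ b ∈ N, x b) * ((∏ b ∈ s \ N, x b) - 1)‖ := by
            rw [dist_eq_norm, ← hsplit]; ring_nf
        _ = ‖∏ b ∈ N, x b‖ * ‖(∏ b ∈ s \ N, x b) - 1‖ := norm_mul _ _
        _ ≤ C * (ε / (2 * C)) :=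
            mul_le_mul (hCb N) h5 (norm_nonneg _) hC0.le
        _ = ε / 2 := by field_simp
    refine ⟨N, fun n hn => ?_⟩
    calc dist (∏ b ∈ n, x b) (∏ b ∈ N, x b) ≤ ε / 2 := hkey n hn
      _ < ε := by linarith
  obtain ⟨a, ha⟩ := cauchySeq_tendsto_of_complete hcs
  exact ⟨a, ha⟩

lemma aux_tprod_bound {β : Type*} (x : β → ℂ) (u : β → ℝ) (hu : ∀ b, ‖x b - 1‖ ≤ u b)
    (hsum : Summable u) : ‖(∏' b, x b) - 1‖ ≤ Real.exp (∑' b, u b) - 1 := by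
  have h0 : ∀ b, (0:ℝ) ≤ u b := fun b => (norm_nonneg _).trans (hu b)
  have hm : Multipliable x := aux_multipliable x u hu hsum
  refine le_of_tendsto ((hm.hasProd.sub tendsto_const_nhds).norm) ?_
  filter_upwards with S
  calc ‖(∏ b ∈ S, x b) - 1‖ ≤ Real.exp (∑ b ∈ S, u b) - 1 := aux_prod_bound x u hu S
    _ ≤ Real.exp (∑' b, u b) - 1 := by
        have := Summable.sum_le_tsum S (fun b _ => h0 b) hsum
        simpa using Real.exp_le_exp.2 this

/-- Dominated convergence for infinite products in `ℂ`. -/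
lemma prodDCT {ι β : Type*} {l : Filter ι} {f : ι → β → ℂ} {g : β → ℂ} {u : β → ℝ}
    (hu : Summable u) (hfg : ∀ b, Tendsto (fun i => f i b) l (𝓝 (g b)))
    (hb : ∀ᶠ i in l, ∀ b, ‖f i b - 1‖ ≤ u b) :
    Tendsto (fun i => ∏' b, f i b) l (𝓝 (∏' b, g b)) := by
  classical
  rcases l.eq_or_neBot with rfl | hne
  · exact tendsto_bot
  have hg : ∀ b, ‖g b - 1‖ ≤ u b := fun b =>
    le_of_tendsto ((hfg b).sub tendsto_const_nhds).norm (hb.mono fun i h => h b)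
  have h0 : ∀ b, (0:ℝ) ≤ u b := fun b => (norm_nonneg _).trans (hg b)
  rw [Metric.tendsto_nhds]
  intro ε hε
  set C : ℝ := Real.exp (∑' b, u b) with hCdef
  have hC0 : (0:ℝ) < C := Real.exp_pos _
  set η : ℝ := Real.log (1 + ε / (6 * C)) with hηdef
  have hη0 : 0 < η := Real.log_pos (by
    have := div_pos hε (by positivity : (0:ℝ) < 6 * C); linarith)
  obtain ⟨S, hS⟩ : ∃ S : Finset β, ∑' b : {b // b ∉ S}, u b < η :=
    ((tendsto_tsum_compl_atTop_zero u).eventually (gt_mem_nhds hη0)).exists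
  have hS' : ∑' b : ↑((S : Set β)ᶜ), u b < η := hS
  have key : ∀ x : β → ℂ, (∀ b, ‖x b - 1‖ ≤ u b) →
      ‖(∏' b, x b) - ∏ b ∈ S, x b‖ < ε / 3 := by
    intro x hx
    have hm : Multipliable x := aux_multipliable x u hx hu
    have hmc : Multipliable (fun b : ↑((S : Set β)ᶜ) => x ↑b) :=
      aux_multipliable _ _ (fun b => hx ↑b) (hu.subtype _)
    have hmS : Multipliable (fun b : ↑(S : Set β) => x ↑b) := Multipliable.of_finite
    have hdecomp : (∏ b ∈ S, x b) * (∏' b : ↑((S : Set β)ᶜ), x b) = ∏' b, x b := by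
      rw [← Finset.tprod_subtype' S x]
      exact Multipliable.tprod_mul_tprod_compl hmS hmc
    have htail : ‖(∏' b : ↑((S : Set β)ᶜ), x b) - 1‖ ≤
        Real.exp (∑' b : ↑((S : Set β)ᶜ), u b) - 1 :=
      aux_tprod_bound _ _ (fun b => hx b) (hu.subtype _)
    have hnorm : ‖∏ b ∈ S, x b‖ ≤ C :=
      (aux_norm_prod_le x u hx S).trans
        (Real.exp_le_exp.2 (Summable.sum_le_tsum S (fun b _ => h0 b) hu))
    have hexp : Real.exp (∑' b : ↑((S : Set β)ᶜ), u b) - 1 < ε / (6 * C) := by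
      have := Real.exp_lt_exp.2 hS'
      rw [hηdef, Real.exp_log (by positivity)] at this
      linarith
    have htail0 : (0:ℝ) ≤ ‖(∏' b : ↑((S : Set β)ᶜ), x b) - 1‖ := norm_nonneg _
    calc ‖(∏' b, x b) - ∏ b ∈ S, x b‖
        = ‖∏ b ∈ S, x b‖ * ‖(∏' b : ↑((S : Set β)ᶜ), x b) - 1‖ := by
          rw [← norm_mul, ← hdecomp]; ring_nf
      _ ≤ C * (ε / (6 * C)) := by
          apply mul_le_mul hnorm (htail.trans hexp.le) htail0 hC0.le
      _ = ε / 6 := by field_simp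
      _ < ε / 3 := by linarith
  have h2 : Tendsto (fun i => ∏ b ∈ S, f i b) l (𝓝 (∏ b ∈ S, g b)) :=
    tendsto_finset_prod S fun b _ => hfg b
  have h2' := (Metric.tendsto_nhds.1 h2) (ε / 3) (by linarith)
  filter_upwards [hb, h2'] with i hi hdi
  have e1 := key (f i) hi
  have e3 := key g hg
  calc dist (∏' b, f i b) (∏' b, g b)
      ≤ dist (∏' b, f i b) (∏ b ∈ S, f i b) + dist (∏ b ∈ S, f i b) (∏ b ∈ S, g b)
        + dist (∏ b ∈ S, g b) (∏' b, g b) := dist_triangle4 _ _ _ _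
    _ < ε / 3 + ε / 3 + ε / 3 := by
        refine add_lt_add (add_lt_add ?_ hdi) ?_
        · rw [dist_eq_norm]; exact e1
        · rw [dist_eq_norm, norm_sub_rev]; exact e3
    _ = ε := by ring

lemma qPochInf_zero (q : ℂ) : qPochInf 0 q = 1 := by
  simp [qPochInf]

/-- Master lemma: if `w p → w0` as `p → 0⁺` then `(w p; p, q) → (w0; q)_∞`. -/
lemma master {q : ℂ} (hq : ‖q‖ < 1) {w : ℝ → ℂ} {w0 : ℂ}
    (hw : Tendsto w (nhdsWithin 0 (Set.Ioi 0)) (𝓝 w0)) :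
    Tendsto (fun p : ℝ => pqPoch (w p) (p : ℂ) q) (nhdsWithin 0 (Set.Ioi 0))
      (𝓝 (qPochInf w0 q)) := by
  set l := nhdsWithin (0 : ℝ) (Set.Ioi 0) with hl
  have hp0 : Tendsto (fun p : ℝ => (p : ℂ)) l (𝓝 0) := by
    have := (Complex.continuous_ofReal.tendsto 0).mono_left
      (nhdsWithin_le_nhds : l ≤ 𝓝 0)
    simpa using this
  set M : ℝ := ‖w0‖ + 1 with hM
  set u : ℕ × ℕ → ℝ := fun rs => M * ((1 / 2 : ℝ) ^ rs.1 * (‖q‖) ^ rs.2) with hu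
  have hqn : (0:ℝ) ≤ ‖q‖ := norm_nonneg q
  have husum : Summable u := by
    apply Summable.mul_left
    exact Summable.mul_of_nonneg (summable_geometric_of_lt_one (by norm_num) (by norm_num))
      (summable_geometric_of_lt_one hqn hq) (fun n => by positivity) (fun n => by positivity)
  have hfg : ∀ rs : ℕ × ℕ, Tendsto (fun p : ℝ => 1 - w p * (p : ℂ) ^ rs.1 * q ^ rs.2) l
      (𝓝 (1 - w0 * (0 : ℂ) ^ rs.1 * q ^ rs.2)) := fun rs =>
    tendsto_const_nhds.sub (((hw.mul (hp0.pow rs.1)).mul_const _))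
  have hbound : ∀ᶠ p in l, ∀ rs : ℕ × ℕ,
      ‖(1 - w p * (p : ℂ) ^ rs.1 * q ^ rs.2) - 1‖ ≤ u rs := by
    have hA : ∀ᶠ p in l, ‖w p‖ < M :=
      hw.norm.eventually (eventually_lt_nhds (by simp only [hM]; linarith))
    have hB : ∀ᶠ p in l, p ∈ Set.Ioi (0:ℝ) := eventually_mem_nhdsWithin
    have hC : ∀ᶠ p in l, p < 1 / 2 :=
      (eventually_lt_nhds (by norm_num : (0:ℝ) < 1/2)).filter_mono nhdsWithin_le_nhds
    filter_upwards [hA, hB, hC] with p h1 h2 h3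
    intro rs
    have hp : (0:ℝ) < p := h2
    have : ‖(1 - w p * (p : ℂ) ^ rs.1 * q ^ rs.2) - 1‖
        = ‖w p‖ * p ^ rs.1 * (‖q‖) ^ rs.2 := by
      rw [sub_sub_cancel_left, norm_neg, norm_mul, norm_mul, norm_pow, norm_pow,
        Complex.norm_real, Real.norm_eq_abs, abs_of_pos hp]
    rw [this, hu]
    have h4 : p ^ rs.1 ≤ (1/2:ℝ) ^ rs.1 := pow_le_pow_left₀ hp.le h3.le _
    calc ‖w p‖ * p ^ rs.1 * (‖q‖) ^ rs.2
        ≤ M * (1/2:ℝ) ^ rs.1 * (‖q‖) ^ rs.2 := by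
          apply mul_le_mul_of_nonneg_right _ (by positivity)
          exact mul_le_mul h1.le h4 (by positivity) (by positivity)
      _ = M * ((1/2:ℝ) ^ rs.1 * (‖q‖) ^ rs.2) := by ring
  have main := prodDCT husum hfg hbound
  have heq : (∏' rs : ℕ × ℕ, (1 - w0 * (0 : ℂ) ^ rs.1 * q ^ rs.2)) = qPochInf w0 q := by
    rw [qPochInf]
    rw [← Function.Injective.tprod_eq (g := fun s : ℕ => ((0, s) : ℕ × ℕ))
      (fun a b h => by simpa using h) ?_]
    · exact tprod_congr fun s => by norm_num
    · rintro ⟨r, s⟩ hrs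
      rcases Nat.eq_zero_or_pos r with rfl | hr
      · exact ⟨s, rfl⟩
      · exfalso
        apply hrs
        simp [zero_pow hr.ne']
  have : Tendsto (fun p : ℝ => ∏' rs : ℕ × ℕ, (1 - w p * (p : ℂ) ^ rs.1 * q ^ rs.2)) l
      (𝓝 (qPochInf w0 q)) := heq ▸ main
  exact this

end aux

section mainthm
open Topology

/-- Elementary limits of the elliptic gamma function as real `p → 0⁺`, for `0 ≤ α ≤ 1`:
`lim Γ(p^α z;p,q)` equals `1/(z;q)_∞` if `α = 0`, `1` if `0 < α < 1`, and `(q/z;q)_∞`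
if `α = 1`. -/
theorem ellGamma_limit (q z : ℂ) (hq : ‖q‖ < 1) (hz : z ≠ 0)
    (α : ℝ) (h0 : 0 ≤ α) (h1 : α ≤ 1) :
    (α = 0 → qPochInf z q ≠ 0 →
      Tendsto (fun p : ℝ => ellGamma ((((p : ℝ) ^ α : ℝ) : ℂ) * z) (p : ℂ) q)
        (nhdsWithin 0 (Set.Ioi 0)) (nhds (1 / qPochInf z q))) ∧
    (0 < α → α < 1 →
      Tendsto (fun p : ℝ => ellGamma ((((p : ℝ) ^ α : ℝ) : ℂ) * z) (p : ℂ) q)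
        (nhdsWithin 0 (Set.Ioi 0)) (nhds 1)) ∧
    (α = 1 →
      Tendsto (fun p : ℝ => ellGamma ((p : ℂ) * z) (p : ℂ) q)
        (nhdsWithin 0 (Set.Ioi 0)) (nhds (qPochInf (q / z) q))) := by
  have hp0 : Tendsto (fun p : ℝ => (p : ℂ)) (nhdsWithin 0 (Set.Ioi 0)) (𝓝 0) := by
    have := (Complex.continuous_ofReal.tendsto 0).mono_left
      (nhdsWithin_le_nhds : nhdsWithin (0:ℝ) (Set.Ioi 0) ≤ 𝓝 0)
    simpa using this
  have hrpow : ∀ β : ℝ, 0 < β →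
      Tendsto (fun p : ℝ => ((p ^ β : ℝ) : ℂ)) (nhdsWithin 0 (Set.Ioi 0)) (𝓝 0) := by
    intro β hβ
    have h1 : Tendsto (fun p : ℝ => p ^ β) (𝓝 0) (𝓝 ((0:ℝ) ^ β)) :=
      (Real.continuousAt_rpow_const 0 β (Or.inr hβ.le)).tendsto
    rw [Real.zero_rpow hβ.ne'] at h1
    have h2 := (Complex.continuous_ofReal.tendsto 0).comp
      (h1.mono_left (nhdsWithin_le_nhds (s := Set.Ioi (0:ℝ))))
    simpa [Function.comp_def] using h2
  refine ⟨?_, ?_, ?_⟩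
  · -- case α = 0
    rintro rfl hzq
    simp only [ellGamma, Real.rpow_zero, Complex.ofReal_one, one_mul]
    have num : Tendsto (fun p : ℝ => pqPoch ((p : ℂ) * q / z) (p : ℂ) q)
        (nhdsWithin 0 (Set.Ioi 0)) (𝓝 (qPochInf 0 q)) :=
      master hq (by simpa using (hp0.mul_const q).div_const z)
    rw [qPochInf_zero] at num
    have den : Tendsto (fun p : ℝ => pqPoch z (p : ℂ) q)
        (nhdsWithin 0 (Set.Ioi 0)) (𝓝 (qPochInf z q)) :=
      master hq tendsto_const_nhds
    exact num.div den hzq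
  · -- case 0 < α < 1
    intro ha0 ha1
    simp only [ellGamma]
    have hwden : Tendsto (fun p : ℝ => ((p ^ α : ℝ) : ℂ) * z)
        (nhdsWithin 0 (Set.Ioi 0)) (𝓝 0) := by
      simpa using (hrpow α ha0).mul_const z
    have den : Tendsto (fun p : ℝ => pqPoch (((p ^ α : ℝ) : ℂ) * z) (p : ℂ) q)
        (nhdsWithin 0 (Set.Ioi 0)) (𝓝 (qPochInf 0 q)) := master hq hwden
    have hwnum : Tendsto (fun p : ℝ => (p : ℂ) * q / (((p ^ α : ℝ) : ℂ) * z))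
        (nhdsWithin 0 (Set.Ioi 0)) (𝓝 0) := by
      have base : Tendsto (fun p : ℝ => ((p ^ (1 - α) : ℝ) : ℂ) * (q / z))
          (nhdsWithin 0 (Set.Ioi 0)) (𝓝 0) := by
        simpa using (hrpow (1 - α) (by linarith)).mul_const (q / z)
      refine Tendsto.congr' ?_ base
      filter_upwards [self_mem_nhdsWithin] with p hp
      have hpp : (0:ℝ) < p := hp
      have hpα : (0:ℝ) < p ^ α := Real.rpow_pos_of_pos hpp α
      have hcast : (p : ℂ) = ((p ^ (1 - α) : ℝ) : ℂ) * ((p ^ α : ℝ) : ℂ) := by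
        rw [← Complex.ofReal_mul, ← Real.rpow_add hpp, sub_add_cancel, Real.rpow_one]
      rw [hcast]
      have hαne : ((p ^ α : ℝ) : ℂ) ≠ 0 := Complex.ofReal_ne_zero.2 hpα.ne'
      field_simp
    have num : Tendsto (fun p : ℝ => pqPoch ((p : ℂ) * q / (((p ^ α : ℝ) : ℂ) * z)) (p : ℂ) q)
        (nhdsWithin 0 (Set.Ioi 0)) (𝓝 (qPochInf 0 q)) := master hq hwnum
    rw [qPochInf_zero] at num den
    simpa only [div_one, Pi.div_def] using num.div den one_ne_zero
  · -- case α = 1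
    intro ha
    simp only [ellGamma]
    have hwnum : Tendsto (fun p : ℝ => (p : ℂ) * q / ((p : ℂ) * z))
        (nhdsWithin 0 (Set.Ioi 0)) (𝓝 (q / z)) := by
      refine Tendsto.congr' ?_ (tendsto_const_nhds (x := q / z))
      filter_upwards [self_mem_nhdsWithin] with p hp
      have hpne : (p : ℂ) ≠ 0 := Complex.ofReal_ne_zero.2 (ne_of_gt hp)
      exact (mul_div_mul_left q z hpne).symm
    have num : Tendsto (fun p : ℝ => pqPoch ((p : ℂ) * q / ((p : ℂ) * z)) (p : ℂ) q)
        (nhdsWithin 0 (Set.Ioi 0)) (𝓝 (qPochInf (q / z) q)) := master hq hwnum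
    have den : Tendsto (fun p : ℝ => pqPoch ((p : ℂ) * z) (p : ℂ) q)
        (nhdsWithin 0 (Set.Ioi 0)) (𝓝 (qPochInf 0 q)) :=
      master hq (by simpa using hp0.mul_const z)
    rw [qPochInf_zero] at den
    simpa only [div_one, Pi.div_def] using num.div den one_ne_zero

end mainthm
end
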